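/- Suppose R > M and let S ∈ (M, R]. Then there exist a weight function w : E_S → (0,∞) and a flow φ : Γ_S → [0,∞) with Σ_{γ∈Γ_S(x,x')} φ(γ) = π(x)·π(x') for all x ≠ x', such that A(E_S, w, φ) ≤ (c(S/M)/2)·max_{z∈X∖{x*}} 1/P(z, N_S(z)), where P(z, N_S(z)) = Σ_{z'∈N_S(z)} P(z,z'). -/

import Mathlib

open Finset

noncomputable section

variable {X : Type*}

/-- Total variation distance between two (finitely supported) distributions. -/
def tvDist [Fintype X] (ζ μ : X → ℝ) : ℝ :=
  ⨆ A : Finset X, |∑ a ∈ A, ζ a - ∑ a ∈ A, μ a|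

/-- The lazy version `(P + I)/2` of a transition matrix. -/
def lazyM [Fintype X] [DecidableEq X] (P : Matrix X X ℝ) : Matrix X X ℝ :=
  (2 : ℝ)⁻¹ • (P + 1)

/-- Mixing time started from `x`. -/
def mixTimeFrom [Fintype X] [DecidableEq X] (P : Matrix X X ℝ) (μ : X → ℝ) (ε : ℝ) (x : X) : ℕ :=
  sInf {t : ℕ | tvDist (fun y => (P ^ t) x y) μ ≤ ε}

/-- Worst-case mixing time. -/
def mixTime [Fintype X] [DecidableEq X] (P : Matrix X X ℝ) (μ : X → ℝ) (ε : ℝ) : ℕ :=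
  Finset.univ.sup (mixTimeFrom P μ ε)

/-- Variational spectral gap of a reversible transition matrix. -/
def specGap [Fintype X] (P : Matrix X X ℝ) (μ : X → ℝ) : ℝ :=
  sInf { r : ℝ | ∃ f : X → ℝ,
    (2⁻¹ * ∑ x, ∑ y, (f x - f y) ^ 2 * μ x * μ y) ≠ 0 ∧
    r = (2⁻¹ * ∑ x, ∑ y, (f x - f y) ^ 2 * P x y * μ x) /
        (2⁻¹ * ∑ x, ∑ y, (f x - f y) ^ 2 * μ x * μ y) }

/-- Restricted spectral gap on `X0`. -/
def restGap [Fintype X] (P : Matrix X X ℝ) (μ : X → ℝ) (X0 : Finset X) : ℝ :=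
  sInf { r : ℝ | ∃ f : X → ℝ,
    0 < (∑ x ∈ X0, ∑ y ∈ X0, (f x - f y) ^ 2 * μ x * μ y) ∧
    r = (∑ x ∈ X0, ∑ y ∈ X0, (f x - f y) ^ 2 * P x y * μ x) /
        (∑ x ∈ X0, ∑ y ∈ X0, (f x - f y) ^ 2 * μ x * μ y) }

/-- `c(ρ) = 4 / (1 - ρ^{-1/2})³`. -/
def cFun (ρ : ℝ) : ℝ := 4 / (1 - ρ ^ (-(2 : ℝ)⁻¹)) ^ 3

/-- Maximum neighborhood size. -/
def Mmax [Fintype X] (N : X → Finset X) : ℕ := Finset.univ.sup fun x => (N x).card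

/-- Minimal value of `π`. -/
def piMin [Fintype X] [Nonempty X] (π : X → ℝ) : ℝ := ⨅ x, π x

/-- `R = min_{x ≠ x*} max_{y ∈ N(x)} π(y)/π(x)`. -/
def Rval [Fintype X] (π : X → ℝ) (N : X → Finset X) (xstar : X) : ℝ :=
  sInf ((fun x => sSup ((fun y => π y / π x) '' (N x : Set X))) '' {x | x ≠ xstar})

/-- Restricted `R|_{X₀}`. -/
def RvalRes [Fintype X] [DecidableEq X] (π : X → ℝ) (N : X → Finset X) (X0 : Finset X)
    (x0star : X) : ℝ :=
  sInf ((fun x => sSup ((fun y => π y / π x) '' ((N x ∩ X0 : Finset X) : Set X))) ''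
    {x | x ∈ X0 ∧ x ≠ x0star})

/-- Random walk Metropolis–Hastings transition matrix. -/
def rwMH [Fintype X] [DecidableEq X] (π : X → ℝ) (N : X → Finset X) : Matrix X X ℝ :=
  Matrix.of fun x y =>
    if y ∈ N x then min (((N x).card : ℝ))⁻¹ (π y / (π x * ((N y).card : ℝ)))
    else if y = x then
      1 - ∑ z ∈ N x, min (((N x).card : ℝ))⁻¹ (π z / (π x * ((N z).card : ℝ)))
    else 0

/-- The clipping function `clip(u, ℓ, L)`. -/
def clip (l L u : ℝ) : ℝ := if u < l then l else if u ≤ L then u else L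

/-- Normalizing constant of the informed proposal. -/
def Zh [Fintype X] (π : X → ℝ) (N : X → Finset X) (l L : ℝ) (x : X) : ℝ :=
  ∑ y ∈ N x, clip l L (π y / π x)

/-- Informed proposal kernel. -/
def Kh [Fintype X] [DecidableEq X] (π : X → ℝ) (N : X → Finset X) (l L : ℝ) (x y : X) : ℝ :=
  (if y ∈ N x then clip l L (π y / π x) else 0) / Zh π N l L x

/-- Informed Metropolis–Hastings transition matrix. -/
def infMH [Fintype X] [DecidableEq X] (π : X → ℝ) (N : X → Finset X) (l L : ℝ) :
    Matrix X X ℝ :=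
  Matrix.of fun x y =>
    if y = x then
      1 - ∑ z ∈ Finset.univ.erase x,
        Kh π N l L x z * min 1 ((π z * Kh π N l L z x) / (π x * Kh π N l L x z))
    else Kh π N l L x y * min 1 ((π y * Kh π N l L y x) / (π x * Kh π N l L x y))

/-- List of consecutive edges of a list of vertices. -/
def edgeList : List X → List (X × X)
  | a :: b :: rest => (a, b) :: edgeList (b :: rest)
  | _ => []

/-- `γ` is a path from `x` to `y` (x ≠ y) with all edges in `E` and no repeated edge. -/
def IsPathIn (E : Finset (X × X)) (x y : X) (γ : List X) : Prop :=
  x ≠ y ∧ γ.head? = some x ∧ γ.getLast? = some y ∧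
    (∀ e ∈ edgeList γ, e ∈ E) ∧ (edgeList γ).Nodup

/-- `Φ(x,y) = Σ_{γ ∈ Γ_E(x,y)} φ(γ)`. -/
def flowBetween (E : Finset (X × X)) (φ : List X → ℝ) (x y : X) : ℝ :=
  ∑' γ : {γ : List X // IsPathIn E x y γ}, φ γ

/-- Flow from `x` to `y` through the edge `e`. -/
def flowBetweenThrough (E : Finset (X × X)) (φ : List X → ℝ) (x y : X) (e : X × X) : ℝ :=
  ∑' γ : {γ : List X // IsPathIn E x y γ ∧ e ∈ edgeList γ}, φ γ

/-- `w`-length of a path. -/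
def wlen (w : X × X → ℝ) (γ : List X) : ℝ := ((edgeList γ).map w).sum

/-- Congestion `A(E, w, φ)`. -/
def congestion [Fintype X] (π : X → ℝ) (P : Matrix X X ℝ) (E : Finset (X × X))
    (w : X × X → ℝ) (φ : List X → ℝ) : ℝ :=
  ⨆ e ∈ E,
    (∑' γ : {γ : List X // (∃ x y, IsPathIn E x y γ) ∧ e ∈ edgeList γ}, wlen w γ * φ γ) /
      (π e.1 * P e.1 e.2 * w e)

/-- `N_S(x) = {x' ∈ N(x) : π(x')/π(x) ≥ S}`. -/
def NS [Fintype X] (π : X → ℝ) (N : X → Finset X) (S : ℝ) (x : X) : Finset X :=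
  (N x).filter fun y => S ≤ π y / π x

/-- Edge set `E_S`. -/
def ES [Fintype X] [DecidableEq X] (π : X → ℝ) (N : X → Finset X) (S : ℝ) : Finset (X × X) :=
  Finset.univ.filter fun e => e.1 ∈ NS π N S e.2 ∨ e.2 ∈ NS π N S e.1

/-- Restricted `N|^S_{X₀}(x)`. -/
def NSres [Fintype X] [DecidableEq X] (π : X → ℝ) (N : X → Finset X) (X0 : Finset X) (S : ℝ)
    (x : X) : Finset X :=
  ((N x) ∩ X0).filter fun y => S ≤ π y / π x

/-- Restricted edge set `E_S⁰`. -/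
def ESres [Fintype X] [DecidableEq X] (π : X → ℝ) (N : X → Finset X) (X0 : Finset X)
    (S : ℝ) : Finset (X × X) :=
  Finset.univ.filter fun e =>
    (e.1 ∈ X0 ∧ e.2 ∈ X0) ∧ (e.1 ∈ NSres π N X0 S e.2 ∨ e.2 ∈ NSres π N X0 S e.1)

end

namespace StmtAux
open Finset List

variable {X : Type*}

lemma edgeList_nil : edgeList ([] : List X) = [] := rfl
lemma edgeList_single (a : X) : edgeList [a] = [] := rfl
lemma edgeList_cons₂ (a b : X) (t : List X) :
    edgeList (a :: b :: t) = (a, b) :: edgeList (b :: t) := rfl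

lemma edgeList_cons {u : X} {l : List X} (h : l.head? = some u) (z : X) :
    edgeList (z :: l) = (z, u) :: edgeList l := by
  cases l with
  | nil => simp at h
  | cons a t =>
    simp only [List.head?_cons, Option.some.injEq] at h
    subst h; rfl

lemma edgeList_map_fst : ∀ l : List X, (edgeList l).map Prod.fst = l.dropLast
  | [] => rfl
  | [a] => rfl
  | a :: b :: t => by
    rw [edgeList_cons₂, List.map_cons, edgeList_map_fst (b :: t)]
    simp

lemma chain'_edgeList {R : X → X → Prop} :
    ∀ {l : List X}, List.Chain' R l → ∀ e ∈ edgeList l, R e.1 e.2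
  | [], _, e, he => by simp [edgeList_nil] at he
  | [a], _, e, he => by simp [edgeList_single] at he
  | a :: b :: t, h, e, he => by
    rw [edgeList_cons₂, List.mem_cons] at he
    rcases List.isChain_cons_cons.mp h with ⟨hab, ht⟩
    rcases he with rfl | he
    · exact hab
    · exact chain'_edgeList ht e he

lemma edgeList_concat : ∀ (l : List X) (b a : X), l.getLast? = some b →
    edgeList (l ++ [a]) = edgeList l ++ [(b, a)]
  | [], b, a, h => by simp at h
  | [c], b, a, h => by
    simp only [List.getLast?_singleton, Option.some.injEq] at h
    subst h; rfl
  | c :: d :: t, b, a, h => by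
    have h' : (d :: t).getLast? = some b := by rwa [List.getLast?_cons_cons] at h
    have : (c :: d :: t) ++ [a] = c :: d :: (t ++ [a]) := rfl
    rw [this, edgeList_cons₂]
    show (c, d) :: edgeList ((d :: t) ++ [a]) = _
    rw [edgeList_concat (d :: t) b a h', edgeList_cons₂]
    rfl

lemma edgeList_reverse : ∀ l : List X,
    edgeList l.reverse = ((edgeList l).map Prod.swap).reverse
  | [] => rfl
  | [a] => rfl
  | a :: b :: t => by
    have hlast : (b :: t).reverse.getLast? = some b := by
      rw [List.getLast?_reverse]; rfl
    rw [List.reverse_cons, edgeList_concat _ b a hlast, edgeList_reverse (b :: t),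
      edgeList_cons₂, List.map_cons, List.reverse_cons]
    rfl

lemma edgeList_append : ∀ (l₁ : List X) (x : X) (l₂ : List X),
    edgeList (l₁ ++ x :: l₂) = edgeList (l₁ ++ [x]) ++ edgeList (x :: l₂)
  | [], x, l₂ => rfl
  | [a], x, l₂ => rfl
  | a :: b :: t, x, l₂ => by
    have h1 : (a :: b :: t) ++ x :: l₂ = a :: b :: (t ++ x :: l₂) := rfl
    have h2 : (a :: b :: t) ++ [x] = a :: b :: (t ++ [x]) := rfl
    rw [h1, h2, edgeList_cons₂, edgeList_cons₂,
      show (b :: (t ++ x :: l₂)) = (b :: t) ++ x :: l₂ from rfl,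
      show (b :: (t ++ [x])) = (b :: t) ++ [x] from rfl,
      edgeList_append (b :: t) x l₂]
    rfl

lemma pairwise_getLast {R : X → X → Prop} {l : List X} {b : X}
    (hp : l.Pairwise R) (hb : l.getLast? = some b) :
    ∀ a ∈ l.dropLast, R a b := by
  have hne : l ≠ [] := by rintro rfl; simp at hb
  have hsplit := List.dropLast_append_getLast hne
  have hb' : l.getLast hne = b := by
    rw [List.getLast?_eq_getLast hne] at hb; exact Option.some.inj hb
  rw [← hsplit] at hp
  rw [List.pairwise_append] at hp
  intro a ha
  have := hp.2.2 a ha (l.getLast hne) (by simp)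
  rwa [hb'] at this

lemma split_eq {c : X} : ∀ {l₁ l₂ l₁' l₂' : List X},
    (∀ a ∈ l₁, a ≠ c) → (∀ a ∈ l₁', a ≠ c) →
    l₂.head? = some c → l₂'.head? = some c →
    l₁ ++ l₂ = l₁' ++ l₂' → l₁ = l₁' ∧ l₂ = l₂'
  | [], l₂, [], l₂', _, _, _, _, h => ⟨rfl, h⟩
  | [], l₂, a' :: t', l₂', h1, h1', h2, h2', h => by
    exfalso
    simp only [List.nil_append] at h
    rw [h, List.cons_append, List.head?_cons] at h2
    exact h1' a' (by simp) (Option.some.inj h2)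
  | a :: t, l₂, [], l₂', h1, h1', h2, h2', h => by
    exfalso
    simp only [List.nil_append] at h
    rw [← h, List.cons_append, List.head?_cons] at h2'
    exact h1 a (by simp) (Option.some.inj h2')
  | a :: t, l₂, a' :: t', l₂', h1, h1', h2, h2', h => by
    simp only [List.cons_append, List.cons.injEq] at h
    obtain ⟨rfl, h⟩ := h
    obtain ⟨h3, h4⟩ := split_eq (fun x hx => h1 x (List.mem_cons_of_mem _ hx))
      (fun x hx => h1' x (List.mem_cons_of_mem _ hx)) h2 h2' h
    exact ⟨by rw [h3], h4⟩

end StmtAux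

namespace StmtAux2
open Finset List
set_option linter.unusedSectionVars false

variable {X : Type*} [Fintype X] [DecidableEq X]

/-- height: number of points with strictly larger `π`. -/
noncomputable def ht (π : X → ℝ) (z : X) : ℕ := (Finset.univ.filter fun w => π z < π w).card

lemma ht_lt {π : X → ℝ} {N : X → Finset X} {S : ℝ}
    (hup : ∀ z u, u ∈ NS π N S z → π z < π u) {z u : X}
    (hu : u ∈ NS π N S z) : ht π u < ht π z := by
  apply Finset.card_lt_card
  have hsub : (Finset.univ.filter fun w => π u < π w) ⊆ (Finset.univ.filter fun w => π z < π w) := by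
    intro w hw
    simp only [Finset.mem_filter, Finset.mem_univ, true_and] at hw ⊢
    exact lt_trans (hup z u hu) hw
  rw [Finset.ssubset_iff_of_subset hsub]
  exact ⟨u, by simp [hup z u hu], by simp⟩

lemma ht_le_card (π : X → ℝ) (z : X) : ht π z ≤ Fintype.card X :=
  (Finset.card_filter_le _ _).trans_eq Finset.card_univ

noncomputable def UpA (π : X → ℝ) (N : X → Finset X) (S : ℝ) (xstar : X) : ℕ → X → Finset (List X)
  | 0, z => if z = xstar then {[xstar]} else ∅
  | n+1, z => if z = xstar then {[xstar]} else
      (NS π N S z).biUnion fun u => (UpA π N S xstar n u).image (z :: ·)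

variable (π : X → ℝ) (N : X → Finset X) (S : ℝ) (xstar : X)

lemma UpA_xstar : ∀ n, UpA π N S xstar n xstar = {[xstar]} := by
  intro n; cases n <;> simp [UpA]

variable {π N S xstar}

lemma NS_empty_of_ht_zero (hup : ∀ z u, u ∈ NS π N S z → π z < π u) {z : X}
    (hht : ht π z = 0) : NS π N S z = ∅ := by
  rw [Finset.eq_empty_iff_forall_notMem]
  intro u hu
  have : u ∈ Finset.univ.filter fun w => π z < π w := by simp [hup z u hu]
  have h2 : 0 < ht π z := Finset.card_pos.mpr ⟨u, this⟩
  omega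

lemma UpA_fuel (hup : ∀ z u, u ∈ NS π N S z → π z < π u) :
    ∀ n m z, ht π z ≤ n → ht π z ≤ m →
      UpA π N S xstar n z = UpA π N S xstar m z := by
  intro n
  induction n with
  | zero =>
    intro m z h0 _
    by_cases hz : z = xstar
    · subst hz; rw [UpA_xstar, UpA_xstar]
    · have hNS : NS π N S z = ∅ := NS_empty_of_ht_zero hup (Nat.le_zero.mp h0)
      cases m with
      | zero => rfl
      | succ m => simp [UpA, hz, hNS]
  | succ n IH =>
    intro m z hn hm
    by_cases hz : z = xstar
    · subst hz; rw [UpA_xstar, UpA_xstar]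
    · cases m with
      | zero =>
        have hNS : NS π N S z = ∅ := NS_empty_of_ht_zero hup (Nat.le_zero.mp hm)
        simp [UpA, hz, hNS]
      | succ m =>
        simp only [UpA, hz, if_false]
        apply Finset.biUnion_congr rfl
        intro u hu
        have h1 : ht π u ≤ n := Nat.lt_succ_iff.mp (lt_of_lt_of_le (ht_lt hup hu) hn)
        have h2 : ht π u ≤ m := Nat.lt_succ_iff.mp (lt_of_lt_of_le (ht_lt hup hu) hm)
        rw [IH m u h1 h2]

variable (π N S xstar) in
noncomputable def UpP (z : X) : Finset (List X) := UpA π N S xstar (Fintype.card X) z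

lemma UpP_xstar : UpP π N S xstar xstar = {[xstar]} := UpA_xstar π N S xstar _

lemma UpP_rec (hup : ∀ z u, u ∈ NS π N S z → π z < π u) {z : X} (hz : z ≠ xstar) :
    UpP π N S xstar z = (NS π N S z).biUnion fun u => (UpP π N S xstar u).image (z :: ·) := by
  have h1 : UpP π N S xstar z = UpA π N S xstar (ht π z + 1) z :=
    UpA_fuel hup _ _ z (ht_le_card π z) (Nat.le_succ _)
  rw [h1]
  simp only [UpA, hz, if_false]
  apply Finset.biUnion_congr rfl
  intro u hu
  rw [UpA_fuel hup (ht π z) (Fintype.card X) u (Nat.le_of_lt (ht_lt hup hu)) (ht_le_card π u)]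
  rfl

lemma UpA_mem (hup : ∀ z u, u ∈ NS π N S z → π z < π u) :
    ∀ (n : ℕ) (z : X) (γ : List X), γ ∈ UpA π N S xstar n z →
      γ.head? = some z ∧ γ.getLast? = some xstar ∧
        List.Chain' (fun a b => b ∈ NS π N S a) γ := by
  intro n
  induction n with
  | zero =>
    intro z γ hγ
    by_cases hz : z = xstar
    · subst hz
      rw [UpA_xstar, Finset.mem_singleton] at hγ
      subst hγ
      exact ⟨rfl, rfl, List.isChain_singleton _⟩
    · simp [UpA, hz] at hγ
  | succ n IH =>
    intro z γ hγ
    by_cases hz : z = xstar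
    · subst hz
      rw [UpA_xstar, Finset.mem_singleton] at hγ
      subst hγ
      exact ⟨rfl, rfl, List.isChain_singleton _⟩
    · simp only [UpA, hz, if_false, Finset.mem_biUnion, Finset.mem_image] at hγ
      obtain ⟨u, hu, γ', hγ', rfl⟩ := hγ
      obtain ⟨hh, hl, hc⟩ := IH u γ' hγ'
      have hne : γ' ≠ [] := by rintro rfl; simp at hh
      refine ⟨rfl, ?_, ?_⟩
      · cases γ' with
        | nil => exact absurd rfl hne
        | cons a t => rw [List.getLast?_cons_cons]; exact hl
      · refine List.isChain_cons.mpr ?_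
        refine ⟨?_, hc⟩
        intro b hb
        simp only [hh, Option.mem_def, Option.some.injEq] at hb
        subst hb
        exact hu

lemma UpP_mem (hup : ∀ z u, u ∈ NS π N S z → π z < π u) {z : X} {γ : List X}
    (h : γ ∈ UpP π N S xstar z) :
    γ.head? = some z ∧ γ.getLast? = some xstar ∧
      List.Chain' (fun a b => b ∈ NS π N S a) γ :=
  UpA_mem hup _ z γ h

end StmtAux2

namespace StmtAux3
open Finset List StmtAux StmtAux2

set_option linter.unusedSectionVars false
set_option linter.unusedVariables false

variable {X : Type*} [Fintype X] [DecidableEq X]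
variable {π : X → ℝ} {N : X → Finset X} {S : ℝ} {xstar : X} {P : Matrix X X ℝ}

lemma list_prod_nonneg : ∀ {l : List ℝ}, (∀ a ∈ l, 0 ≤ a) → 0 ≤ l.prod
  | [], _ => by simp
  | a :: t, h => by
    rw [List.prod_cons]
    exact mul_nonneg (h a (by simp)) (list_prod_nonneg fun b hb => h b (List.mem_cons_of_mem _ hb))

lemma list_sum_nonneg : ∀ {l : List ℝ}, (∀ a ∈ l, 0 ≤ a) → 0 ≤ l.sum
  | [], _ => by simp
  | a :: t, h => by
    rw [List.sum_cons]
    exact add_nonneg (h a (by simp)) (list_sum_nonneg fun b hb => h b (List.mem_cons_of_mem _ hb))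

variable {z : X} {γ : List X}

lemma UpP_head (hup : ∀ z u, u ∈ NS π N S z → π z < π u)
    (h : γ ∈ UpP π N S xstar z) : γ.head? = some z := (UpP_mem hup h).1

lemma UpP_last (hup : ∀ z u, u ∈ NS π N S z → π z < π u)
    (h : γ ∈ UpP π N S xstar z) : γ.getLast? = some xstar := (UpP_mem hup h).2.1

lemma UpP_chain (hup : ∀ z u, u ∈ NS π N S z → π z < π u)
    (h : γ ∈ UpP π N S xstar z) :
    List.Chain' (fun a b => b ∈ NS π N S a) γ := (UpP_mem hup h).2.2

lemma UpP_ne_nil (hup : ∀ z u, u ∈ NS π N S z → π z < π u)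
    (h : γ ∈ UpP π N S xstar z) : γ ≠ [] := by
  intro hn
  have h2 := UpP_head hup h
  rw [hn] at h2
  simp at h2

lemma UpP_pairwise (hup : ∀ z u, u ∈ NS π N S z → π z < π u)
    (h : γ ∈ UpP π N S xstar z) : γ.Pairwise fun a b => π a < π b := by
  haveI : IsTrans X fun a b => π a < π b := ⟨fun a b c => lt_trans⟩
  exact List.isChain_iff_pairwise.mp (List.IsChain.imp (fun a b hab => hup a b hab) (UpP_chain hup h))

lemma UpP_nodup (hup : ∀ z u, u ∈ NS π N S z → π z < π u)
    (h : γ ∈ UpP π N S xstar z) : γ.Nodup := (UpP_pairwise hup h).imp fun hab => ne_of_apply_ne π (ne_of_lt hab)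

lemma UpP_edge_mem (hup : ∀ z u, u ∈ NS π N S z → π z < π u)
    (h : γ ∈ UpP π N S xstar z) {e : X × X} (he : e ∈ edgeList γ) :
    e.2 ∈ NS π N S e.1 :=
  chain'_edgeList (UpP_chain hup h) e he

lemma UpP_edges_nodup (hup : ∀ z u, u ∈ NS π N S z → π z < π u)
    (h : γ ∈ UpP π N S xstar z) : (edgeList γ).Nodup := by
  apply List.Nodup.of_map Prod.fst
  rw [edgeList_map_fst]
  exact (UpP_nodup hup h).sublist (List.dropLast_sublist γ)

lemma UpP_dropLast_lt (hup : ∀ z u, u ∈ NS π N S z → π z < π u)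
    (h : γ ∈ UpP π N S xstar z) : ∀ a ∈ γ.dropLast, π a < π xstar :=
  pairwise_getLast (UpP_pairwise hup h) (UpP_last hup h)

lemma UpP_dropLast_ne (hup : ∀ z u, u ∈ NS π N S z → π z < π u)
    (h : γ ∈ UpP π N S xstar z) : ∀ a ∈ γ.dropLast, a ≠ xstar := fun a ha hax => by
  have := UpP_dropLast_lt hup h a ha
  rw [hax] at this
  exact lt_irrefl _ this

lemma UpP_eq_dropLast (hup : ∀ z u, u ∈ NS π N S z → π z < π u)
    (h : γ ∈ UpP π N S xstar z) : γ = γ.dropLast ++ [xstar] := by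
  have hne := UpP_ne_nil hup h
  have h2 := List.dropLast_append_getLast hne
  have h3 : γ.getLast hne = xstar := by
    have h4 := UpP_last hup h
    rw [List.getLast?_eq_getLast hne] at h4
    exact Option.some.inj h4
  rw [← h3]
  exact h2.symm



/-- the proposal distribution restricted to `N_S`. -/
noncomputable def qfun (π : X → ℝ) (N : X → Finset X) (S : ℝ) (P : Matrix X X ℝ) (x u : X) : ℝ :=
  if u ∈ NS π N S x then P x u / ∑ v ∈ NS π N S x, P x v else 0

/-- probability of an up path. -/
noncomputable def pval (π : X → ℝ) (N : X → Finset X) (S : ℝ) (P : Matrix X X ℝ)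
    (γ : List X) : ℝ :=
  ((edgeList γ).map fun e => qfun π N S P e.1 e.2).prod

lemma qfun_nonneg (hPnn : ∀ x y, 0 ≤ P x y) (x u : X) : 0 ≤ qfun π N S P x u := by
  rw [qfun]
  split
  · exact div_nonneg (hPnn x u) (Finset.sum_nonneg fun v _ => hPnn x v)
  · exact le_refl 0

lemma qfun_le_one (hPnn : ∀ x y, 0 ≤ P x y) (x u : X) : qfun π N S P x u ≤ 1 := by
  rw [qfun]
  split
  · rename_i hmem
    by_cases hd : 0 < ∑ v ∈ NS π N S x, P x v
    · rw [div_le_one hd]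
      exact Finset.single_le_sum (fun v _ => hPnn x v) hmem
    · have : ∑ v ∈ NS π N S x, P x v = 0 :=
        le_antisymm (not_lt.mp hd) (Finset.sum_nonneg fun v _ => hPnn x v)
      rw [this, div_zero]
      exact zero_le_one
  · exact zero_le_one

lemma qfun_zero_of_not_mem {x u : X} (h : u ∉ NS π N S x) : qfun π N S P x u = 0 :=
  if_neg h

lemma qfun_sum_eq_one {z : X} (hNSne : (NS π N S z).Nonempty)
    (hPpos : ∀ u ∈ NS π N S z, 0 < P z u) :
    ∑ u ∈ NS π N S z, qfun π N S P z u = 1 := by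
  have hpos : 0 < ∑ v ∈ NS π N S z, P z v := Finset.sum_pos hPpos hNSne
  have h1 : ∑ u ∈ NS π N S z, qfun π N S P z u
      = ∑ u ∈ NS π N S z, P z u / ∑ v ∈ NS π N S z, P z v :=
    Finset.sum_congr rfl fun u hu => by rw [qfun, if_pos hu]
  rw [h1, ← Finset.sum_div]
  exact div_self (ne_of_gt hpos)

lemma pval_nonneg (hPnn : ∀ x y, 0 ≤ P x y) (γ : List X) : 0 ≤ pval π N S P γ :=
  list_prod_nonneg fun a ha => by
    obtain ⟨e, _, rfl⟩ := List.mem_map.mp ha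
    exact qfun_nonneg hPnn e.1 e.2

lemma pval_single (a : X) : pval π N S P [a] = 1 := by
  rw [pval, edgeList_single]; rfl

lemma pval_cons {γ : List X} {u : X} (h : γ.head? = some u) (z : X) :
    pval π N S P (z :: γ) = qfun π N S P z u * pval π N S P γ := by
  rw [pval, pval, edgeList_cons h, List.map_cons, List.prod_cons]

lemma wlen_single (w : X × X → ℝ) (a : X) : wlen w [a] = 0 := by
  rw [wlen, edgeList_single]; rfl

lemma wlen_cons {γ : List X} {u : X} (h : γ.head? = some u) (w : X × X → ℝ) (z : X) :
    wlen w (z :: γ) = w (z, u) + wlen w γ := by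
  rw [wlen, wlen, edgeList_cons h, List.map_cons, List.sum_cons]

lemma wlen_nonneg {w : X × X → ℝ} (hw : ∀ e, 0 ≤ w e) (γ : List X) : 0 ≤ wlen w γ :=
  list_sum_nonneg fun a ha => by
    obtain ⟨e, _, rfl⟩ := List.mem_map.mp ha
    exact hw e

lemma sum_UpP_rec (hup : ∀ z u, u ∈ NS π N S z → π z < π u) {z : X} (hz : z ≠ xstar)
    (f : List X → ℝ) :
    ∑ γ ∈ UpP π N S xstar z, f γ =
      ∑ u ∈ NS π N S z, ∑ γ' ∈ UpP π N S xstar u, f (z :: γ') := by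
  rw [UpP_rec hup hz, Finset.sum_biUnion]
  · apply Finset.sum_congr rfl
    intro u hu
    apply Finset.sum_image
    intro a _ b _ hab
    exact (List.cons.inj hab).2
  · intro u hu v hv huv
    apply Finset.disjoint_left.mpr
    intro l hlu hlv
    rw [Finset.mem_image] at hlu hlv
    obtain ⟨a, ha, rfl⟩ := hlu
    obtain ⟨b, hb, hba⟩ := hlv
    have hab : b = a := (List.cons.inj hba).2
    subst hab
    have h1 := UpP_head hup ha
    have h2 := UpP_head hup hb
    rw [h1] at h2
    exact huv (Option.some.inj h2)

end StmtAux3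

namespace StmtAux4
open Finset List StmtAux StmtAux2 StmtAux3

set_option linter.unusedSectionVars false
set_option linter.unusedVariables false

variable {X : Type*} [Fintype X] [DecidableEq X]
variable {π : X → ℝ} {N : X → Finset X} {S : ℝ} {xstar : X} {P : Matrix X X ℝ}

lemma sum_pval_eq_one (hup : ∀ z u, u ∈ NS π N S z → π z < π u)
    (hNSne : ∀ z, z ≠ xstar → (NS π N S z).Nonempty)
    (hPpos : ∀ z, ∀ u ∈ NS π N S z, 0 < P z u) :
    ∀ z, ∑ γ ∈ UpP π N S xstar z, pval π N S P γ = 1 := by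
  suffices H : ∀ n z, ht π z ≤ n → ∑ γ ∈ UpP π N S xstar z, pval π N S P γ = 1 from
    fun z => H (ht π z) z le_rfl
  intro n
  induction n with
  | zero =>
    intro z h0
    by_cases hz : z = xstar
    · subst hz; rw [UpP_xstar, Finset.sum_singleton, pval_single]
    · exact absurd (NS_empty_of_ht_zero hup (Nat.le_zero.mp h0))
        (Finset.nonempty_iff_ne_empty.mp (hNSne z hz))
  | succ n IH =>
    intro z hn
    by_cases hz : z = xstar
    · subst hz; rw [UpP_xstar, Finset.sum_singleton, pval_single]
    · rw [sum_UpP_rec hup hz]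
      have h2 : ∀ u ∈ NS π N S z,
          ∑ γ' ∈ UpP π N S xstar u, pval π N S P (z :: γ') = qfun π N S P z u := by
        intro u hu
        have h3 : ∀ γ' ∈ UpP π N S xstar u,
            pval π N S P (z :: γ') = qfun π N S P z u * pval π N S P γ' :=
          fun γ' hγ' => pval_cons (UpP_head hup hγ') z
        rw [Finset.sum_congr rfl h3, ← Finset.mul_sum,
          IH u (by have := ht_lt hup hu; omega), mul_one]
      rw [Finset.sum_congr rfl h2, qfun_sum_eq_one (hNSne z hz) (hPpos z)]

noncomputable def Lam (π : X → ℝ) (N : X → Finset X) (S : ℝ) (xstar : X) (P : Matrix X X ℝ)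
    (w : X × X → ℝ) (z : X) : ℝ :=
  ∑ γ ∈ UpP π N S xstar z, pval π N S P γ * wlen w γ

noncomputable def Fe (π : X → ℝ) (N : X → Finset X) (S : ℝ) (xstar : X) (P : Matrix X X ℝ)
    (e : X × X) (z : X) : ℝ :=
  ∑ γ ∈ UpP π N S xstar z, if e ∈ edgeList γ then pval π N S P γ else 0

noncomputable def Ge (π : X → ℝ) (N : X → Finset X) (S : ℝ) (xstar : X) (P : Matrix X X ℝ)
    (w : X × X → ℝ) (e : X × X) (z : X) : ℝ :=
  ∑ γ ∈ UpP π N S xstar z, if e ∈ edgeList γ then pval π N S P γ * wlen w γ else 0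

lemma Lam_nonneg (hPnn : ∀ x y, 0 ≤ P x y) {w : X × X → ℝ} (hwnn : ∀ e, 0 ≤ w e) (z : X) :
    0 ≤ Lam π N S xstar P w z :=
  Finset.sum_nonneg fun γ _ => mul_nonneg (pval_nonneg hPnn γ) (wlen_nonneg hwnn γ)

lemma Fe_nonneg (hPnn : ∀ x y, 0 ≤ P x y) (e : X × X) (z : X) :
    0 ≤ Fe π N S xstar P e z :=
  Finset.sum_nonneg fun γ _ => by
    split
    · exact pval_nonneg hPnn γ
    · exact le_refl 0

lemma Ge_nonneg (hPnn : ∀ x y, 0 ≤ P x y) {w : X × X → ℝ} (hwnn : ∀ e, 0 ≤ w e)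
    (e : X × X) (z : X) : 0 ≤ Ge π N S xstar P w e z :=
  Finset.sum_nonneg fun γ _ => by
    split
    · exact mul_nonneg (pval_nonneg hPnn γ) (wlen_nonneg hwnn γ)
    · exact le_refl 0

lemma Lam_xstar (w : X × X → ℝ) : Lam π N S xstar P w xstar = 0 := by
  rw [Lam, UpP_xstar, Finset.sum_singleton, wlen_single, mul_zero]

lemma Fe_xstar (e : X × X) : Fe π N S xstar P e xstar = 0 := by
  rw [Fe, UpP_xstar, Finset.sum_singleton, edgeList_single, if_neg (show e ∉ ([] : List (X × X)) from List.not_mem_nil)]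

lemma Ge_xstar (w : X × X → ℝ) (e : X × X) : Ge π N S xstar P w e xstar = 0 := by
  rw [Ge, UpP_xstar, Finset.sum_singleton, edgeList_single, if_neg (show e ∉ ([] : List (X × X)) from List.not_mem_nil)]

lemma Lam_le (hup : ∀ z u, u ∈ NS π N S z → π z < π u)
    (hNSne : ∀ z, z ≠ xstar → (NS π N S z).Nonempty)
    (hPpos : ∀ z, ∀ u ∈ NS π N S z, 0 < P z u)
    (hPnn : ∀ x y, 0 ≤ P x y)
    {w : X × X → ℝ} {ω : X → ℝ} {r : ℝ}
    (hω_pos : ∀ z, 0 < ω z)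
    (hω_step : ∀ z u, u ∈ NS π N S z → ω u ≤ r * ω z)
    (hw : ∀ z u, u ∈ NS π N S z → w (z, u) = ω z)
    (hr0 : 0 ≤ r) (hr1 : r < 1) (hwnn : ∀ e, 0 ≤ w e) :
    ∀ z, Lam π N S xstar P w z ≤ ω z / (1 - r) := by
  have hr1' : 0 < 1 - r := by linarith
  suffices H : ∀ n z, ht π z ≤ n → Lam π N S xstar P w z ≤ ω z / (1 - r) from
    fun z => H (ht π z) z le_rfl
  intro n
  induction n with
  | zero =>
    intro z h0
    by_cases hz : z = xstar
    · subst hz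
      rw [Lam_xstar]
      exact div_nonneg (le_of_lt (hω_pos _)) (le_of_lt hr1')
    · exact absurd (NS_empty_of_ht_zero hup (Nat.le_zero.mp h0))
        (Finset.nonempty_iff_ne_empty.mp (hNSne z hz))
  | succ n IH =>
    intro z hn
    by_cases hz : z = xstar
    · subst hz
      rw [Lam_xstar]
      exact div_nonneg (le_of_lt (hω_pos _)) (le_of_lt hr1')
    · rw [Lam, sum_UpP_rec hup hz]
      have key : ∀ u ∈ NS π N S z,
          ∑ γ' ∈ UpP π N S xstar u, pval π N S P (z :: γ') * wlen w (z :: γ')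
            = qfun π N S P z u * (ω z + Lam π N S xstar P w u) := by
        intro u hu
        have h3 : ∀ γ' ∈ UpP π N S xstar u,
            pval π N S P (z :: γ') * wlen w (z :: γ')
              = qfun π N S P z u * (pval π N S P γ' * ω z + pval π N S P γ' * wlen w γ') := by
          intro γ' hγ'
          rw [pval_cons (UpP_head hup hγ') z, wlen_cons (UpP_head hup hγ') w z,
            hw z u hu]
          ring
        rw [Finset.sum_congr rfl h3, ← Finset.mul_sum, Finset.sum_add_distrib,
          ← Finset.sum_mul, sum_pval_eq_one hup hNSne hPpos u, one_mul]
        rfl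
      rw [Finset.sum_congr rfl key]
      have bound : ∀ u ∈ NS π N S z,
          qfun π N S P z u * (ω z + Lam π N S xstar P w u)
            ≤ qfun π N S P z u * (ω z / (1 - r)) := by
        intro u hu
        apply mul_le_mul_of_nonneg_left _ (qfun_nonneg hPnn z u)
        have h4 : Lam π N S xstar P w u ≤ ω u / (1 - r) :=
          IH u (by have := ht_lt hup hu; omega)
        have h5 : ω u ≤ r * ω z := hω_step z u hu
        have h6 : ω u / (1 - r) ≤ r * ω z / (1 - r) := (div_le_div_iff_of_pos_right hr1').mpr h5
        have h7 : ω z + r * ω z / (1 - r) = ω z / (1 - r) := by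
          field_simp
          ring
        linarith
      calc ∑ u ∈ NS π N S z, qfun π N S P z u * (ω z + Lam π N S xstar P w u)
          ≤ ∑ u ∈ NS π N S z, qfun π N S P z u * (ω z / (1 - r)) :=
            Finset.sum_le_sum bound
        _ = (∑ u ∈ NS π N S z, qfun π N S P z u) * (ω z / (1 - r)) := by
            rw [Finset.sum_mul]
        _ = ω z / (1 - r) := by
            rw [qfun_sum_eq_one (hNSne z hz) (hPpos z), one_mul]

lemma Fe_rec (hup : ∀ z u, u ∈ NS π N S z → π z < π u)
    (hNSne : ∀ z, z ≠ xstar → (NS π N S z).Nonempty)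
    (hPpos : ∀ z, ∀ u ∈ NS π N S z, 0 < P z u)
    (hNSxstar : NS π N S xstar = ∅) (e : X × X) (z : X) :
    Fe π N S xstar P e z = ∑ u ∈ NS π N S z,
      qfun π N S P z u * (if (z, u) = e then 1 else Fe π N S xstar P e u) := by
  by_cases hz : z = xstar
  · subst hz
    rw [Fe_xstar, hNSxstar, Finset.sum_empty]
  · rw [Fe, sum_UpP_rec hup hz]
    apply Finset.sum_congr rfl
    intro u hu
    have hstep : ∀ γ' ∈ UpP π N S xstar u,
        (if e ∈ edgeList (z :: γ') then pval π N S P (z :: γ') else 0)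
          = qfun π N S P z u *
            (if (z, u) = e then pval π N S P γ'
              else if e ∈ edgeList γ' then pval π N S P γ' else 0) := by
      intro γ' hγ'
      rw [edgeList_cons (UpP_head hup hγ') z, pval_cons (UpP_head hup hγ') z]
      by_cases hc : (z, u) = e
      · rw [if_pos hc, if_pos (by rw [← hc]; exact List.mem_cons_self)]
      · rw [if_neg hc]
        by_cases hm : e ∈ edgeList γ'
        · rw [if_pos hm, if_pos (List.mem_cons_of_mem _ hm)]
        · rw [if_neg hm, if_neg (by
            rw [List.mem_cons]
            push_neg
            exact ⟨fun he => hc he.symm, hm⟩), mul_zero]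
    rw [Finset.sum_congr rfl hstep, ← Finset.mul_sum]
    congr 1
    by_cases hc : (z, u) = e
    · rw [if_pos hc, Finset.sum_congr rfl (fun γ' _ => if_pos hc),
        sum_pval_eq_one hup hNSne hPpos u]
    · rw [if_neg hc, Fe]
      exact Finset.sum_congr rfl fun γ' _ => if_neg hc

lemma Ge_rec (hup : ∀ z u, u ∈ NS π N S z → π z < π u)
    (hNSne : ∀ z, z ≠ xstar → (NS π N S z).Nonempty)
    (hPpos : ∀ z, ∀ u ∈ NS π N S z, 0 < P z u)
    (hNSxstar : NS π N S xstar = ∅) (w : X × X → ℝ) (e : X × X) (z : X) :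
    Ge π N S xstar P w e z = ∑ u ∈ NS π N S z,
      qfun π N S P z u *
        (if (z, u) = e then (w (z, u) + Lam π N S xstar P w u)
          else (w (z, u) * Fe π N S xstar P e u + Ge π N S xstar P w e u)) := by
  by_cases hz : z = xstar
  · subst hz
    rw [Ge_xstar, hNSxstar, Finset.sum_empty]
  · rw [Ge, sum_UpP_rec hup hz]
    apply Finset.sum_congr rfl
    intro u hu
    have hstep : ∀ γ' ∈ UpP π N S xstar u,
        (if e ∈ edgeList (z :: γ') then pval π N S P (z :: γ') * wlen w (z :: γ') else 0)
          = qfun π N S P z u *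
            (if (z, u) = e
              then (pval π N S P γ' * w (z, u) + pval π N S P γ' * wlen w γ')
              else if e ∈ edgeList γ'
                then (pval π N S P γ' * w (z, u) + pval π N S P γ' * wlen w γ') else 0) := by
      intro γ' hγ'
      rw [edgeList_cons (UpP_head hup hγ') z, pval_cons (UpP_head hup hγ') z,
        wlen_cons (UpP_head hup hγ') w z]
      by_cases hc : (z, u) = e
      · rw [if_pos hc, if_pos (by rw [← hc]; exact List.mem_cons_self)]
        ring
      · rw [if_neg hc]
        by_cases hm : e ∈ edgeList γ'
        · rw [if_pos hm, if_pos (List.mem_cons_of_mem _ hm)]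
          ring
        · rw [if_neg hm, if_neg (by
            rw [List.mem_cons]
            push_neg
            exact ⟨fun he => hc he.symm, hm⟩), mul_zero]
    rw [Finset.sum_congr rfl hstep, ← Finset.mul_sum]
    congr 1
    by_cases hc : (z, u) = e
    · rw [if_pos hc, Finset.sum_congr rfl (fun γ' _ => if_pos hc),
        Finset.sum_add_distrib, ← Finset.sum_mul, sum_pval_eq_one hup hNSne hPpos u, one_mul]
      rfl
    · rw [if_neg hc, Finset.sum_congr rfl (fun γ' _ => if_neg hc)]
      have split : ∀ γ' : List X,
          (if e ∈ edgeList γ'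
            then (pval π N S P γ' * w (z, u) + pval π N S P γ' * wlen w γ') else 0)
          = w (z, u) * (if e ∈ edgeList γ' then pval π N S P γ' else 0)
            + (if e ∈ edgeList γ' then pval π N S P γ' * wlen w γ' else 0) := by
        intro γ'
        by_cases hm : e ∈ edgeList γ'
        · rw [if_pos hm, if_pos hm, if_pos hm]
          ring
        · rw [if_neg hm, if_neg hm, if_neg hm, mul_zero, add_zero]
      rw [Finset.sum_congr rfl (fun γ' _ => split γ'), Finset.sum_add_distrib,
        ← Finset.mul_sum, Fe, Ge]

end StmtAux4

namespace StmtAux5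
open Finset List StmtAux StmtAux2 StmtAux3 StmtAux4

set_option linter.unusedSectionVars false
set_option linter.unusedVariables false

variable {X : Type*} [Fintype X] [DecidableEq X]
variable {π : X → ℝ} {N : X → Finset X} {S : ℝ} {xstar : X} {P : Matrix X X ℝ}

/-- concatenation of an up path and a reversed up path. -/
def comb (g1 g2 : List X) : List X := g1.dropLast ++ g2.reverse

lemma edges_nodup_of_nodup {l : List X} (h : l.Nodup) : (edgeList l).Nodup := by
  apply List.Nodup.of_map Prod.fst
  rw [edgeList_map_fst]
  exact h.sublist (List.dropLast_sublist l)

section CombFacts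

variable {x y : X} {g1 g2 : List X}

variable (hup : ∀ z u, u ∈ NS π N S z → π z < π u)
include hup

lemma comb_head (h1 : g1 ∈ UpP π N S xstar x) (h2 : g2 ∈ UpP π N S xstar y) :
    (comb g1 g2).head? = some x := by
  by_cases hx : g1.dropLast = []
  · have hxx : g1 = [xstar] := by
      have := UpP_eq_dropLast hup h1
      rwa [hx, List.nil_append] at this
    have hx2 : x = xstar := by
      have := UpP_head hup h1
      rw [hxx] at this
      exact (Option.some.inj this).symm
    rw [comb, hx, List.nil_append, List.head?_reverse, UpP_last hup h2, hx2]
  · obtain ⟨a, ha⟩ : ∃ a, g1.dropLast.head? = some a := by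
      cases hdl : g1.dropLast with
      | nil => exact absurd hdl hx
      | cons a t => exact ⟨a, rfl⟩
    have hax : a = x := by
      have hh := UpP_head hup h1
      rw [UpP_eq_dropLast hup h1, List.head?_append, ha, Option.some_or] at hh
      exact Option.some.inj hh
    rw [comb, List.head?_append, ha, Option.some_or, hax]

lemma comb_last (h1 : g1 ∈ UpP π N S xstar x) (h2 : g2 ∈ UpP π N S xstar y) :
    (comb g1 g2).getLast? = some y := by
  rw [comb, List.getLast?_append, List.getLast?_reverse, UpP_head hup h2]
  rfl

lemma comb_edges (h1 : g1 ∈ UpP π N S xstar x) (h2 : g2 ∈ UpP π N S xstar y) :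
    edgeList (comb g1 g2) = edgeList g1 ++ edgeList g2.reverse := by
  have hrev : g2.reverse.head? = some xstar := by
    rw [List.head?_reverse]
    exact UpP_last hup h2
  cases hr : g2.reverse with
  | nil => rw [hr] at hrev; simp at hrev
  | cons c t =>
    have hc : c = xstar := by
      rw [hr] at hrev
      exact Option.some.inj hrev
    subst hc
    rw [comb, hr, edgeList_append, ← UpP_eq_dropLast hup h1, ← hr]

lemma rev_edge_mem (h2 : g2 ∈ UpP π N S xstar y) {e : X × X}
    (he : e ∈ edgeList g2.reverse) : e.1 ∈ NS π N S e.2 := by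
  rw [edgeList_reverse, List.mem_reverse, List.mem_map] at he
  obtain ⟨e', he', rfl⟩ := he
  exact UpP_edge_mem hup h2 he'

lemma comb_path (h1 : g1 ∈ UpP π N S xstar x) (h2 : g2 ∈ UpP π N S xstar y)
    (hxy : x ≠ y) : IsPathIn (ES π N S) x y (comb g1 g2) := by
  refine ⟨hxy, comb_head hup h1 h2, comb_last hup h1 h2, ?_, ?_⟩
  · intro e he
    rw [comb_edges hup h1 h2, List.mem_append] at he
    rw [ES, Finset.mem_filter]
    refine ⟨Finset.mem_univ e, ?_⟩
    rcases he with he | he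
    · exact Or.inr (UpP_edge_mem hup h1 he)
    · exact Or.inl (rev_edge_mem hup h2 he)
  · rw [comb_edges hup h1 h2, List.nodup_append]
    refine ⟨UpP_edges_nodup hup h1, edges_nodup_of_nodup (List.nodup_reverse.mpr (UpP_nodup hup h2)), ?_⟩
    rintro e he1 _ he2 rfl
    have l1 : π e.1 < π e.2 := hup _ _ (UpP_edge_mem hup h1 he1)
    have l2 : π e.2 < π e.1 := hup _ _ (rev_edge_mem hup h2 he2)
    exact absurd l1 (not_lt.mpr (le_of_lt l2))

lemma comb_inj {x' y' : X} {d1 d2 : List X}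
    (h1 : g1 ∈ UpP π N S xstar x) (h2 : g2 ∈ UpP π N S xstar y)
    (h3 : d1 ∈ UpP π N S xstar x') (h4 : d2 ∈ UpP π N S xstar y')
    (heq : comb g1 g2 = comb d1 d2) : g1 = d1 ∧ g2 = d2 := by
  have hs := split_eq (c := xstar) (UpP_dropLast_ne hup h1) (UpP_dropLast_ne hup h3)
    (by rw [List.head?_reverse]; exact UpP_last hup h2)
    (by rw [List.head?_reverse]; exact UpP_last hup h4) heq
  constructor
  · rw [UpP_eq_dropLast hup h1, UpP_eq_dropLast hup h3, hs.1]
  · exact List.reverse_injective hs.2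

end CombFacts

variable (X) in
noncomputable def Pairs : Finset (X × X) := Finset.univ.filter fun p => p.1 ≠ p.2

variable (π N S xstar) in
noncomputable def bigT : Finset ((_ : X × X) × (List X × List X)) :=
  (Pairs X).sigma fun p => UpP π N S xstar p.1 ×ˢ UpP π N S xstar p.2

variable (π N S xstar P) in
noncomputable def phi (γ : List X) : ℝ :=
  ∑ σ ∈ bigT π N S xstar, if γ = comb σ.2.1 σ.2.2
    then π σ.1.1 * π σ.1.2 * (pval π N S P σ.2.1 * pval π N S P σ.2.2) else 0

lemma phi_nonneg (hπpos : ∀ x, 0 < π x) (hPnn : ∀ x y, 0 ≤ P x y) (γ : List X) :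
    0 ≤ phi π N S xstar P γ :=
  Finset.sum_nonneg fun σ _ => by
    split
    · exact mul_nonneg (mul_nonneg (le_of_lt (hπpos _)) (le_of_lt (hπpos _)))
        (mul_nonneg (pval_nonneg hPnn _) (pval_nonneg hPnn _))
    · exact le_refl 0

lemma bigT_elim {σ : (_ : X × X) × (List X × List X)} (hσ : σ ∈ bigT π N S xstar) :
    σ.1.1 ≠ σ.1.2 ∧ σ.2.1 ∈ UpP π N S xstar σ.1.1 ∧ σ.2.2 ∈ UpP π N S xstar σ.1.2 := by
  rw [bigT, Finset.mem_sigma, Finset.mem_product] at hσ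
  refine ⟨?_, hσ.2.1, hσ.2.2⟩
  have := hσ.1
  rw [Pairs, Finset.mem_filter] at this
  exact this.2

lemma comb_inj_sigma (hup : ∀ z u, u ∈ NS π N S z → π z < π u)
    {σ τ : (_ : X × X) × (List X × List X)}
    (hσ : σ ∈ bigT π N S xstar) (hτ : τ ∈ bigT π N S xstar)
    (heq : comb σ.2.1 σ.2.2 = comb τ.2.1 τ.2.2) : σ = τ := by
  obtain ⟨hne, h1, h2⟩ := bigT_elim hσ
  obtain ⟨hne', h3, h4⟩ := bigT_elim hτ
  obtain ⟨e1, e2⟩ := comb_inj hup h1 h2 h3 h4 heq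
  obtain ⟨⟨x, y⟩, g1, g2⟩ := σ
  obtain ⟨⟨x', y'⟩, d1, d2⟩ := τ
  simp only at e1 e2 h1 h2 h3 h4
  subst e1
  subst e2
  have ex : x = x' := by
    have ha := UpP_head hup h1
    have hb := UpP_head hup h3
    rw [ha] at hb
    exact Option.some.inj hb
  have ey : y = y' := by
    have ha := UpP_head hup h2
    have hb := UpP_head hup h4
    rw [ha] at hb
    exact Option.some.inj hb
  subst ex
  subst ey
  rfl

lemma phi_comb (hup : ∀ z u, u ∈ NS π N S z → π z < π u)
    {σ : (_ : X × X) × (List X × List X)} (hσ : σ ∈ bigT π N S xstar) :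
    phi π N S xstar P (comb σ.2.1 σ.2.2)
      = π σ.1.1 * π σ.1.2 * (pval π N S P σ.2.1 * pval π N S P σ.2.2) := by
  rw [phi, Finset.sum_eq_single_of_mem σ hσ, if_pos rfl]
  intro τ hτ hτσ
  rw [if_neg]
  intro hcond
  exact hτσ (comb_inj_sigma hup hτ hσ hcond.symm)

lemma tsum_pred_eq_sum (Pred : List X → Prop) (f : List X → ℝ) (T : Finset (List X))
    (h1 : ∀ γ, Pred γ → f γ ≠ 0 → γ ∈ T) (h2 : ∀ γ ∈ T, Pred γ) :
    ∑' γ : {γ : List X // Pred γ}, f γ.1 = ∑ γ ∈ T, f γ := by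
  classical
  have e1 : ∑' γ : {γ : List X // Pred γ}, f γ.1
      = ∑' γ : List X, Set.indicator {l | Pred l} f γ := tsum_subtype {l | Pred l} f
  rw [e1, tsum_eq_sum (s := T) ?side]
  · exact Finset.sum_congr rfl fun γ hγ => Set.indicator_of_mem (show γ ∈ {l | Pred l} from h2 γ hγ) f
  case side =>
    intro γ hγT
    by_cases hp : Pred γ
    · rw [Set.indicator_of_mem (show γ ∈ {l | Pred l} from hp)]
      by_contra hne
      exact hγT (h1 γ hp hne)
    · exact Set.indicator_of_notMem (show γ ∉ {l | Pred l} from hp) f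

lemma flow_eq (hup : ∀ z u, u ∈ NS π N S z → π z < π u)
    (hNSne : ∀ z, z ≠ xstar → (NS π N S z).Nonempty)
    (hPpos : ∀ z, ∀ u ∈ NS π N S z, 0 < P z u)
    {x y : X} (hxy : x ≠ y) :
    flowBetween (ES π N S) (phi π N S xstar P) x y = π x * π y := by
  classical
  set T : Finset (List X) :=
    (UpP π N S xstar x ×ˢ UpP π N S xstar y).image fun pr => comb pr.1 pr.2 with hT
  rw [flowBetween, tsum_pred_eq_sum (IsPathIn (ES π N S) x y) (phi π N S xstar P) T ?h1 ?h2]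
  · rw [hT, Finset.sum_image ?inj]
    case inj =>
      intro a ha b hb hab
      rw [Finset.mem_coe, Finset.mem_product] at ha hb
      obtain ⟨e1, e2⟩ := comb_inj hup ha.1 ha.2 hb.1 hb.2 hab
      exact Prod.ext e1 e2
    have hterm : ∀ pr ∈ UpP π N S xstar x ×ˢ UpP π N S xstar y,
        phi π N S xstar P (comb pr.1 pr.2)
          = π x * π y * (pval π N S P pr.1 * pval π N S P pr.2) := by
      intro pr hpr
      rw [Finset.mem_product] at hpr
      have hσ : (⟨(x, y), pr⟩ : (_ : X × X) × (List X × List X)) ∈ bigT π N S xstar := by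
        rw [bigT, Finset.mem_sigma, Finset.mem_product]
        exact ⟨by rw [Pairs, Finset.mem_filter]; exact ⟨Finset.mem_univ _, hxy⟩, hpr.1, hpr.2⟩
      exact phi_comb hup hσ
    rw [Finset.sum_congr rfl hterm, Finset.sum_product]
    have hin : ∀ g1 ∈ UpP π N S xstar x,
        ∑ g2 ∈ UpP π N S xstar y, π x * π y * (pval π N S P g1 * pval π N S P g2)
          = π x * π y * pval π N S P g1 := by
      intro g1 _
      have hr : ∀ g2 ∈ UpP π N S xstar y,
          π x * π y * (pval π N S P g1 * pval π N S P g2)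
            = (π x * π y * pval π N S P g1) * pval π N S P g2 := fun _ _ => by ring
      rw [Finset.sum_congr rfl hr, ← Finset.mul_sum, sum_pval_eq_one hup hNSne hPpos y, mul_one]
    rw [Finset.sum_congr rfl hin, ← Finset.mul_sum, sum_pval_eq_one hup hNSne hPpos x, mul_one]
  case h1 =>
    intro γ hPath hne
    rw [phi] at hne
    obtain ⟨σ, hσ, hval⟩ := Finset.exists_ne_zero_of_sum_ne_zero hne
    have hcond : γ = comb σ.2.1 σ.2.2 := by
      by_contra hc
      rw [if_neg hc] at hval
      exact hval rfl
    obtain ⟨hne', h1, h2⟩ := bigT_elim hσ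
    have hx : σ.1.1 = x := by
      have ha := comb_head hup h1 h2
      rw [← hcond] at ha
      rw [hPath.2.1] at ha
      exact Option.some.inj ha.symm
    have hy : σ.1.2 = y := by
      have ha := comb_last hup h1 h2
      rw [← hcond] at ha
      rw [hPath.2.2.1] at ha
      exact Option.some.inj ha.symm
    rw [hT, Finset.mem_image]
    exact ⟨σ.2, by rw [Finset.mem_product]; rw [hx] at h1; rw [hy] at h2; exact ⟨h1, h2⟩,
      hcond.symm⟩
  case h2 =>
    intro γ hγ
    rw [hT, Finset.mem_image] at hγ
    obtain ⟨pr, hpr, rfl⟩ := hγ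
    rw [Finset.mem_product] at hpr
    exact comb_path hup hpr.1 hpr.2 hxy

end StmtAux5

namespace StmtAux6
open Finset List StmtAux StmtAux2 StmtAux3 StmtAux4 StmtAux5

set_option linter.unusedSectionVars false
set_option linter.unusedVariables false
set_option maxHeartbeats 1000000

variable {X : Type*} [Fintype X] [DecidableEq X]
variable {π : X → ℝ} {N : X → Finset X} {S : ℝ} {xstar : X} {P : Matrix X X ℝ}

lemma mem_edgeList_reverse {l : List X} {e : X × X} :
    e ∈ edgeList l.reverse ↔ Prod.swap e ∈ edgeList l := by
  rw [edgeList_reverse, List.mem_reverse, List.mem_map]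
  constructor
  · rintro ⟨e', he', rfl⟩
    rwa [Prod.swap_swap]
  · intro h
    exact ⟨Prod.swap e, h, Prod.swap_swap e⟩

lemma wlen_reverse {w : X × X → ℝ} (hsym : ∀ e, w (Prod.swap e) = w e) (l : List X) :
    wlen w l.reverse = wlen w l := by
  rw [wlen, wlen, edgeList_reverse, List.map_reverse, List.sum_reverse, List.map_map]
  have hwe : w ∘ Prod.swap = w := funext hsym
  rw [hwe]

section NumFacts

variable (hup : ∀ z u, u ∈ NS π N S z → π z < π u)
include hup

lemma wlen_comb {w : X × X → ℝ} (hsym : ∀ e, w (Prod.swap e) = w e)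
    {x y : X} {g1 g2 : List X}
    (h1 : g1 ∈ UpP π N S xstar x) (h2 : g2 ∈ UpP π N S xstar y) :
    wlen w (comb g1 g2) = wlen w g1 + wlen w g2 := by
  rw [wlen, comb_edges hup h1 h2, List.map_append, List.sum_append]
  rw [show ((edgeList g2.reverse).map w).sum = wlen w g2.reverse from rfl,
    wlen_reverse hsym]
  rfl

lemma comb_mem_up {e : X × X} (hlt : π e.1 < π e.2) {x y : X} {g1 g2 : List X}
    (h1 : g1 ∈ UpP π N S xstar x) (h2 : g2 ∈ UpP π N S xstar y) :
    e ∈ edgeList (comb g1 g2) ↔ e ∈ edgeList g1 := by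
  rw [comb_edges hup h1 h2, List.mem_append]
  constructor
  · rintro (he | he)
    · exact he
    · have := hup _ _ (rev_edge_mem hup h2 he)
      exact absurd hlt (not_lt.mpr (le_of_lt this))
  · exact Or.inl

lemma comb_mem_down {e : X × X} (hlt : π e.2 < π e.1) {x y : X} {g1 g2 : List X}
    (h1 : g1 ∈ UpP π N S xstar x) (h2 : g2 ∈ UpP π N S xstar y) :
    e ∈ edgeList (comb g1 g2) ↔ Prod.swap e ∈ edgeList g2 := by
  rw [comb_edges hup h1 h2, List.mem_append, mem_edgeList_reverse]
  constructor
  · rintro (he | he)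
    · have := hup _ _ (UpP_edge_mem hup h1 he)
      exact absurd hlt (not_lt.mpr (le_of_lt this))
    · exact he
  · exact Or.inr

end NumFacts

variable (π N S xstar P) in
noncomputable def NumSum (w : X × X → ℝ) (e : X × X) : ℝ :=
  ∑ σ ∈ bigT π N S xstar, if e ∈ edgeList (comb σ.2.1 σ.2.2)
    then wlen w (comb σ.2.1 σ.2.2) *
      (π σ.1.1 * π σ.1.2 * (pval π N S P σ.2.1 * pval π N S P σ.2.2)) else 0

lemma num_eq (hup : ∀ z u, u ∈ NS π N S z → π z < π u) (w : X × X → ℝ) (e : X × X) :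
    (∑' γ : {γ : List X // (∃ x y, IsPathIn (ES π N S) x y γ) ∧ e ∈ edgeList γ},
      wlen w γ.1 * phi π N S xstar P γ.1) = NumSum π N S xstar P w e := by
  classical
  set T : Finset (List X) :=
    ((bigT π N S xstar).filter fun σ => e ∈ edgeList (comb σ.2.1 σ.2.2)).image
      fun σ => comb σ.2.1 σ.2.2 with hT
  rw [tsum_pred_eq_sum _ (fun γ => wlen w γ * phi π N S xstar P γ) T ?h1 ?h2]
  · rw [hT, Finset.sum_image ?inj]
    case inj =>
      intro a ha b hb hab
      exact comb_inj_sigma hup (Finset.mem_filter.mp ha).1 (Finset.mem_filter.mp hb).1 hab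
    rw [Finset.sum_congr rfl
      (fun σ hσ => by
        rw [phi_comb hup (Finset.mem_filter.mp hσ).1]),
      Finset.sum_filter]
    rw [NumSum]
  case h1 =>
    intro γ hPred hne
    have hphi : phi π N S xstar P γ ≠ 0 := fun h0 => hne (by
      show wlen w γ * phi π N S xstar P γ = 0
      rw [h0, mul_zero])
    rw [phi] at hphi
    obtain ⟨σ, hσ, hval⟩ := Finset.exists_ne_zero_of_sum_ne_zero hphi
    have hcond : γ = comb σ.2.1 σ.2.2 := by
      by_contra hc
      rw [if_neg hc] at hval
      exact hval rfl
    rw [hT, Finset.mem_image]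
    refine ⟨σ, Finset.mem_filter.mpr ⟨hσ, ?_⟩, hcond.symm⟩
    rw [← hcond]
    exact hPred.2
  case h2 =>
    intro γ hγ
    rw [hT, Finset.mem_image] at hγ
    obtain ⟨σ, hσ, rfl⟩ := hγ
    rw [Finset.mem_filter] at hσ
    obtain ⟨hne', h1, h2⟩ := bigT_elim hσ.1
    exact ⟨⟨σ.1.1, σ.1.2, comb_path hup h1 h2 hne'⟩, hσ.2⟩

lemma NumSum_up_eq (hup : ∀ z u, u ∈ NS π N S z → π z < π u)
    (hNSne : ∀ z, z ≠ xstar → (NS π N S z).Nonempty)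
    (hPpos : ∀ z, ∀ u ∈ NS π N S z, 0 < P z u)
    {w : X × X → ℝ} (hsym : ∀ e, w (Prod.swap e) = w e)
    {e : X × X} (hlt : π e.1 < π e.2) :
    NumSum π N S xstar P w e = ∑ p ∈ Pairs X, π p.1 * π p.2 *
      (Ge π N S xstar P w e p.1 + Fe π N S xstar P e p.1 * Lam π N S xstar P w p.2) := by
  rw [NumSum, bigT, Finset.sum_sigma]
  apply Finset.sum_congr rfl
  rintro ⟨x, y⟩ hp
  rw [Finset.sum_product]
  have inner : ∀ g1 ∈ UpP π N S xstar x,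
      ∑ g2 ∈ UpP π N S xstar y,
        (if e ∈ edgeList (comb g1 g2)
          then wlen w (comb g1 g2) * (π x * π y * (pval π N S P g1 * pval π N S P g2))
          else 0)
      = π x * π y * ((if e ∈ edgeList g1 then pval π N S P g1 * wlen w g1 else 0)
          + (if e ∈ edgeList g1 then pval π N S P g1 else 0) * Lam π N S xstar P w y) := by
    intro g1 hg1
    by_cases hm : e ∈ edgeList g1
    · rw [if_pos hm, if_pos hm]
      have hterm : ∀ g2 ∈ UpP π N S xstar y,
          (if e ∈ edgeList (comb g1 g2)
            then wlen w (comb g1 g2) * (π x * π y * (pval π N S P g1 * pval π N S P g2))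
            else 0)
          = π x * π y * (pval π N S P g1 * wlen w g1) * pval π N S P g2
            + π x * π y * pval π N S P g1 * (pval π N S P g2 * wlen w g2) := by
        intro g2 hg2
        rw [if_pos ((comb_mem_up hup hlt hg1 hg2).mpr hm),
          wlen_comb hup hsym hg1 hg2]
        ring
      rw [Finset.sum_congr rfl hterm, Finset.sum_add_distrib, ← Finset.mul_sum,
        ← Finset.mul_sum, sum_pval_eq_one hup hNSne hPpos y, mul_one]
      rw [show ∑ g2 ∈ UpP π N S xstar y, pval π N S P g2 * wlen w g2
        = Lam π N S xstar P w y from rfl]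
      ring
    · rw [if_neg hm, if_neg hm]
      have hterm : ∀ g2 ∈ UpP π N S xstar y,
          (if e ∈ edgeList (comb g1 g2)
            then wlen w (comb g1 g2) * (π x * π y * (pval π N S P g1 * pval π N S P g2))
            else 0) = 0 := by
        intro g2 hg2
        rw [if_neg (fun hc => hm ((comb_mem_up hup hlt hg1 hg2).mp hc))]
      rw [Finset.sum_congr rfl hterm, Finset.sum_const, smul_zero]
      ring
  rw [Finset.sum_congr rfl inner]
  have outer : ∀ g1 ∈ UpP π N S xstar x,
      π x * π y * ((if e ∈ edgeList g1 then pval π N S P g1 * wlen w g1 else 0)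
        + (if e ∈ edgeList g1 then pval π N S P g1 else 0) * Lam π N S xstar P w y)
      = π x * π y * (if e ∈ edgeList g1 then pval π N S P g1 * wlen w g1 else 0)
        + (π x * π y * Lam π N S xstar P w y) *
          (if e ∈ edgeList g1 then pval π N S P g1 else 0) := fun g1 _ => by ring
  rw [Finset.sum_congr rfl outer, Finset.sum_add_distrib, ← Finset.mul_sum, ← Finset.mul_sum]
  rw [show ∑ g1 ∈ UpP π N S xstar x,
      (if e ∈ edgeList g1 then pval π N S P g1 * wlen w g1 else 0)
    = Ge π N S xstar P w e x from rfl]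
  rw [show ∑ g1 ∈ UpP π N S xstar x, (if e ∈ edgeList g1 then pval π N S P g1 else 0)
    = Fe π N S xstar P e x from rfl]
  ring

lemma NumSum_down_eq (hup : ∀ z u, u ∈ NS π N S z → π z < π u)
    (hNSne : ∀ z, z ≠ xstar → (NS π N S z).Nonempty)
    (hPpos : ∀ z, ∀ u ∈ NS π N S z, 0 < P z u)
    {w : X × X → ℝ} (hsym : ∀ e, w (Prod.swap e) = w e)
    {e : X × X} (hlt : π e.2 < π e.1) :
    NumSum π N S xstar P w e = ∑ p ∈ Pairs X, π p.1 * π p.2 *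
      (Lam π N S xstar P w p.1 * Fe π N S xstar P (Prod.swap e) p.2
        + Ge π N S xstar P w (Prod.swap e) p.2) := by
  rw [NumSum, bigT, Finset.sum_sigma]
  apply Finset.sum_congr rfl
  rintro ⟨x, y⟩ hp
  rw [Finset.sum_product]
  have inner : ∀ g1 ∈ UpP π N S xstar x,
      ∑ g2 ∈ UpP π N S xstar y,
        (if e ∈ edgeList (comb g1 g2)
          then wlen w (comb g1 g2) * (π x * π y * (pval π N S P g1 * pval π N S P g2))
          else 0)
      = π x * π y * ((pval π N S P g1 * wlen w g1) * Fe π N S xstar P (Prod.swap e) y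
          + pval π N S P g1 * Ge π N S xstar P w (Prod.swap e) y) := by
    intro g1 hg1
    have hterm : ∀ g2 ∈ UpP π N S xstar y,
        (if e ∈ edgeList (comb g1 g2)
          then wlen w (comb g1 g2) * (π x * π y * (pval π N S P g1 * pval π N S P g2))
          else 0)
        = π x * π y * (pval π N S P g1 * wlen w g1) *
            (if Prod.swap e ∈ edgeList g2 then pval π N S P g2 else 0)
          + π x * π y * pval π N S P g1 *
            (if Prod.swap e ∈ edgeList g2 then pval π N S P g2 * wlen w g2 else 0) := by
      intro g2 hg2
      by_cases hm : Prod.swap e ∈ edgeList g2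
      · rw [if_pos ((comb_mem_down hup hlt hg1 hg2).mpr hm), if_pos hm, if_pos hm,
          wlen_comb hup hsym hg1 hg2]
        ring
      · rw [if_neg (fun hc => hm ((comb_mem_down hup hlt hg1 hg2).mp hc)), if_neg hm,
          if_neg hm]
        ring
    rw [Finset.sum_congr rfl hterm, Finset.sum_add_distrib, ← Finset.mul_sum, ← Finset.mul_sum]
    rw [show ∑ g2 ∈ UpP π N S xstar y,
        (if Prod.swap e ∈ edgeList g2 then pval π N S P g2 else 0)
      = Fe π N S xstar P (Prod.swap e) y from rfl]
    rw [show ∑ g2 ∈ UpP π N S xstar y,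
        (if Prod.swap e ∈ edgeList g2 then pval π N S P g2 * wlen w g2 else 0)
      = Ge π N S xstar P w (Prod.swap e) y from rfl]
    ring
  rw [Finset.sum_congr rfl inner]
  have outer : ∀ g1 ∈ UpP π N S xstar x,
      π x * π y * ((pval π N S P g1 * wlen w g1) * Fe π N S xstar P (Prod.swap e) y
          + pval π N S P g1 * Ge π N S xstar P w (Prod.swap e) y)
      = (π x * π y * Fe π N S xstar P (Prod.swap e) y) * (pval π N S P g1 * wlen w g1)
        + (π x * π y * Ge π N S xstar P w (Prod.swap e) y) * pval π N S P g1 :=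
    fun g1 _ => by ring
  rw [Finset.sum_congr rfl outer, Finset.sum_add_distrib, ← Finset.mul_sum, ← Finset.mul_sum]
  rw [show ∑ g1 ∈ UpP π N S xstar x, pval π N S P g1 * wlen w g1
    = Lam π N S xstar P w x from rfl]
  rw [sum_pval_eq_one hup hNSne hPpos x, mul_one]
  ring

end StmtAux6

namespace StmtAux7
open Finset List StmtAux StmtAux2 StmtAux3 StmtAux4 StmtAux5 StmtAux6

set_option linter.unusedSectionVars false
set_option linter.unusedVariables false
set_option maxHeartbeats 1000000

variable {X : Type*} [Fintype X] [DecidableEq X]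
variable {π : X → ℝ} {N : X → Finset X} {S : ℝ} {xstar : X} {P : Matrix X X ℝ}

lemma NS_mem_N {z u : X} (h : u ∈ NS π N S z) : u ∈ N z := (Finset.mem_filter.mp h).1

lemma NS_le_div {z u : X} (h : u ∈ NS π N S z) : S ≤ π u / π z := (Finset.mem_filter.mp h).2

lemma NS_pi_le (hπpos : ∀ x, 0 < π x) (hS0 : 0 < S) {z u : X} (h : u ∈ NS π N S z) :
    π z ≤ π u / S := by
  have h1 := NS_le_div h
  rw [le_div_iff₀ (hπpos z)] at h1
  rw [le_div_iff₀ hS0]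
  linarith

lemma Mcard (N : X → Finset X) (u : X) : ((N u).card : ℝ) ≤ (Mmax N : ℝ) :=
  Nat.cast_le.mpr (by
    rw [Mmax]
    exact Finset.le_sup (f := fun x => (N x).card) (Finset.mem_univ u))

lemma qsum_bound (hNsym : ∀ x y, y ∈ N x → x ∈ N y) (hPnn : ∀ x y, 0 ≤ P x y)
    (u : X) (g : X → ℝ) (hgnn : ∀ x, 0 ≤ g x) (c : ℝ) (hc : 0 ≤ c)
    (hbound : ∀ x, u ∈ NS π N S x → g x ≤ c) :
    ∑ x, g x * qfun π N S P x u ≤ (Mmax N : ℝ) * c := by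
  have h1 : ∑ x, g x * qfun π N S P x u = ∑ x ∈ N u, g x * qfun π N S P x u := by
    symm
    apply Finset.sum_subset (Finset.subset_univ _)
    intro x _ hx
    have hns : u ∉ NS π N S x := fun hu => hx (hNsym x u (NS_mem_N hu))
    rw [qfun_zero_of_not_mem hns, mul_zero]
  rw [h1]
  have h2 : ∀ x ∈ N u, g x * qfun π N S P x u ≤ c := by
    intro x hx
    by_cases hu : u ∈ NS π N S x
    · calc g x * qfun π N S P x u ≤ c * 1 :=
          mul_le_mul (hbound x hu) (qfun_le_one hPnn x u) (qfun_nonneg hPnn x u) hc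
        _ = c := mul_one c
    · rw [qfun_zero_of_not_mem hu, mul_zero]
      exact hc
  calc ∑ x ∈ N u, g x * qfun π N S P x u ≤ ∑ _x ∈ N u, c := Finset.sum_le_sum h2
    _ = ((N u).card : ℝ) * c := by rw [Finset.sum_const, nsmul_eq_mul]
    _ ≤ (Mmax N : ℝ) * c := mul_le_mul_of_nonneg_right (Mcard N u) hc

lemma sum_sum_ite_eq {a b : X} (hb : b ∈ NS π N S a) (val : X → X → ℝ) :
    (∑ x, ∑ u ∈ NS π N S x, if (x, u) = (a, b) then val x u else 0) = val a b := by
  have hx : ∀ x : X, (∑ u ∈ NS π N S x, if (x, u) = (a, b) then val x u else 0)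
      = if x = a then val a b else 0 := by
    intro x
    by_cases hxa : x = a
    · subst hxa
      rw [if_pos rfl]
      have hiff : ∀ u ∈ NS π N S x, (if (x, u) = (x, b) then val x u else 0)
          = if u = b then val x u else 0 := by
        intro u _
        apply if_congr _ rfl rfl
        constructor
        · intro h
          exact (Prod.mk.inj h).2
        · intro h
          rw [h]
      rw [Finset.sum_congr rfl hiff, Finset.sum_ite_eq' (NS π N S x) b (fun u => val x u),
        if_pos hb]
    · rw [if_neg hxa]
      apply Finset.sum_eq_zero
      intro u _
      rw [if_neg (fun hc => hxa (Prod.mk.inj hc).1)]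
  rw [Finset.sum_congr rfl (fun x _ => hx x),
    Finset.sum_ite_eq' Finset.univ a (fun _ => val a b), if_pos (Finset.mem_univ a)]

lemma sum_NS_extend (t : X → X → ℝ) (ht : ∀ x u, u ∉ NS π N S x → t x u = 0) :
    (∑ x, ∑ u ∈ NS π N S x, t x u) = ∑ u, ∑ x, t x u := by
  have h1 : ∀ x : X, (∑ u ∈ NS π N S x, t x u) = ∑ u, t x u := by
    intro x
    apply Finset.sum_subset (Finset.subset_univ _)
    intro u _ hu
    exact ht x u hu
  rw [Finset.sum_congr rfl (fun x _ => h1 x), Finset.sum_comm]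

lemma msum_bound (hNsym : ∀ x y, y ∈ N x → x ∈ N y)
    {r c : ℝ} (hr1 : r < 1) (hc : 0 ≤ c)
    (up : X → X) (hupmem : ∀ y, y ≠ xstar → up y ∈ NS π N S y)
    (g : X → ℝ) (hgnn : ∀ y, 0 ≤ g y)
    (hstep : ∀ y, y ≠ xstar → g y ≤ c * g (up y))
    (hcM : c * (Mmax N : ℝ) ≤ r) (hgx : g xstar ≤ 1) :
    ∑ y, g y ≤ 1 / (1 - r) := by
  have h1mr : 0 < 1 - r := by linarith
  have hM0 : 0 ≤ (Mmax N : ℝ) := Nat.cast_nonneg _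
  have hm0 : 0 ≤ ∑ y, g y := Finset.sum_nonneg fun y _ => hgnn y
  have hmsplit : ∑ y, g y = g xstar + ∑ y ∈ Finset.univ.erase xstar, g y :=
    (Finset.add_sum_erase _ g (Finset.mem_univ xstar)).symm
  have hstep2 : ∑ y ∈ Finset.univ.erase xstar, g y
      ≤ c * ∑ y ∈ Finset.univ.erase xstar, g (up y) := by
    rw [Finset.mul_sum]
    apply Finset.sum_le_sum
    intro y hy
    exact hstep y (Finset.ne_of_mem_erase hy)
  have hcomp : ∑ y ∈ Finset.univ.erase xstar, g (up y) ≤ (Mmax N : ℝ) * ∑ y, g y := by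
    rw [Finset.sum_comp g up]
    have hcard : ∀ b ∈ (Finset.univ.erase xstar).image up,
        (((Finset.univ.erase xstar).filter fun y => up y = b).card • g b : ℝ)
          ≤ (Mmax N : ℝ) * g b := by
      intro b _
      rw [nsmul_eq_mul]
      apply mul_le_mul_of_nonneg_right _ (hgnn b)
      have hsub : (Finset.univ.erase xstar).filter (fun y => up y = b) ⊆ N b := by
        intro y hy
        rw [Finset.mem_filter] at hy
        have hyx : y ≠ xstar := Finset.ne_of_mem_erase hy.1
        have : b ∈ NS π N S y := hy.2 ▸ hupmem y hyx
        exact hNsym y b (NS_mem_N this)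
      calc (((Finset.univ.erase xstar).filter fun y => up y = b).card : ℝ)
          ≤ ((N b).card : ℝ) := Nat.cast_le.mpr (Finset.card_le_card hsub)
        _ ≤ (Mmax N : ℝ) := Mcard N b
    calc ∑ b ∈ (Finset.univ.erase xstar).image up,
          (((Finset.univ.erase xstar).filter fun y => up y = b).card • g b : ℝ)
        ≤ ∑ b ∈ (Finset.univ.erase xstar).image up, (Mmax N : ℝ) * g b :=
          Finset.sum_le_sum hcard
      _ ≤ ∑ b, (Mmax N : ℝ) * g b := by
          apply Finset.sum_le_sum_of_subset_of_nonneg (Finset.subset_univ _)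
          intro b _ _
          exact mul_nonneg hM0 (hgnn b)
      _ = (Mmax N : ℝ) * ∑ y, g y := by rw [← Finset.mul_sum]
  have hkey : ∑ y, g y ≤ 1 + r * ∑ y, g y := by
    have h3 : c * ∑ y ∈ Finset.univ.erase xstar, g (up y)
        ≤ c * ((Mmax N : ℝ) * ∑ y, g y) := mul_le_mul_of_nonneg_left hcomp hc
    have h4 : c * ((Mmax N : ℝ) * ∑ y, g y) ≤ r * ∑ y, g y := by
      rw [← mul_assoc]
      exact mul_le_mul_of_nonneg_right hcM hm0
    linarith
  rw [le_div_iff₀ h1mr]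
  nlinarith

end StmtAux7

namespace StmtAux8
open Finset List StmtAux StmtAux2 StmtAux3 StmtAux4 StmtAux5 StmtAux6 StmtAux7

set_option linter.unusedSectionVars false
set_option linter.unusedVariables false
set_option maxHeartbeats 2000000

variable {X : Type*} [Fintype X] [DecidableEq X]
variable {π : X → ℝ} {N : X → Finset X} {S : ℝ} {xstar : X} {P : Matrix X X ℝ}

lemma step_bound
    (hup : ∀ z u, u ∈ NS π N S z → π z < π u)
    (hNSne : ∀ z, z ≠ xstar → (NS π N S z).Nonempty)
    (hPpos : ∀ z, ∀ u ∈ NS π N S z, 0 < P z u)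
    (hPnn : ∀ x y, 0 ≤ P x y)
    (hNSxstar : NS π N S xstar = ∅)
    (ρ : X → ℝ) (hρ : ∀ x, 0 ≤ ρ x)
    (bnd : X → ℝ) (hbnd : ∀ u, (∑ x, ρ x * qfun π N S P x u) ≤ bnd u)
    {a b : X} (hb : b ∈ NS π N S a) :
    (∑ x, ρ x * Fe π N S xstar P (a, b) x)
      ≤ ρ a * qfun π N S P a b
        + ∑ u, bnd u * Fe π N S xstar P (a, b) u := by
  have hFn : ∀ u, 0 ≤ Fe π N S xstar P (a, b) u := fun u => Fe_nonneg hPnn (a, b) u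
  have h1 : (∑ x, ρ x * Fe π N S xstar P (a, b) x) = ∑ x, ∑ u ∈ NS π N S x,
      ρ x * (qfun π N S P x u * (if (x, u) = (a, b) then 1 else Fe π N S xstar P (a, b) u)) := by
    apply Finset.sum_congr rfl
    intro x _
    rw [Fe_rec hup hNSne hPpos hNSxstar (a, b) x, Finset.mul_sum]
  have h2 : ∀ x : X, ∀ u ∈ NS π N S x,
      ρ x * (qfun π N S P x u * (if (x, u) = (a, b) then 1 else Fe π N S xstar P (a, b) u))
        ≤ (if (x, u) = (a, b) then ρ x * qfun π N S P x u else 0)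
          + ρ x * Fe π N S xstar P (a, b) u * qfun π N S P x u := by
    intro x u hu
    have hq0 : 0 ≤ qfun π N S P x u := qfun_nonneg hPnn x u
    by_cases hc : (x, u) = (a, b)
    · rw [if_pos hc, if_pos hc, mul_one]
      have h3 : 0 ≤ ρ x * Fe π N S xstar P (a, b) u * qfun π N S P x u :=
        mul_nonneg (mul_nonneg (hρ x) (hFn u)) hq0
      linarith
    · rw [if_neg hc, if_neg hc]
      have h3 : ρ x * (qfun π N S P x u * Fe π N S xstar P (a, b) u)
          = ρ x * Fe π N S xstar P (a, b) u * qfun π N S P x u := by ring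
      rw [h3]
      linarith
  calc (∑ x, ρ x * Fe π N S xstar P (a, b) x)
      ≤ ∑ x, ∑ u ∈ NS π N S x,
          ((if (x, u) = (a, b) then ρ x * qfun π N S P x u else 0)
            + ρ x * Fe π N S xstar P (a, b) u * qfun π N S P x u) := by
        rw [h1]
        exact Finset.sum_le_sum fun x _ => Finset.sum_le_sum (h2 x)
    _ = (∑ x, ∑ u ∈ NS π N S x, if (x, u) = (a, b) then ρ x * qfun π N S P x u else 0)
          + ∑ x, ∑ u ∈ NS π N S x, ρ x * Fe π N S xstar P (a, b) u * qfun π N S P x u := by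
        rw [← Finset.sum_add_distrib]
        exact Finset.sum_congr rfl fun x _ => Finset.sum_add_distrib
    _ ≤ ρ a * qfun π N S P a b + ∑ u, bnd u * Fe π N S xstar P (a, b) u := by
        apply add_le_add
        · rw [sum_sum_ite_eq hb (fun x u => ρ x * qfun π N S P x u)]
        · rw [sum_NS_extend (fun x u => ρ x * Fe π N S xstar P (a, b) u * qfun π N S P x u)
            (fun x u hu => by
              show ρ x * Fe π N S xstar P (a, b) u * qfun π N S P x u = 0
              rw [qfun_zero_of_not_mem hu, mul_zero])]
          apply Finset.sum_le_sum
          intro u _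
          have h4 : (∑ x, ρ x * Fe π N S xstar P (a, b) u * qfun π N S P x u)
              = (∑ x, ρ x * qfun π N S P x u) * Fe π N S xstar P (a, b) u := by
            rw [Finset.sum_mul]
            exact Finset.sum_congr rfl fun x _ => by ring
          rw [h4]
          exact mul_le_mul_of_nonneg_right (hbnd u) (hFn u)

lemma master_bound
    (hup : ∀ z u, u ∈ NS π N S z → π z < π u)
    (hNSne : ∀ z, z ≠ xstar → (NS π N S z).Nonempty)
    (hPpos : ∀ z, ∀ u ∈ NS π N S z, 0 < P z u)
    (hPnn : ∀ x y, 0 ≤ P x y)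
    (hNSxstar : NS π N S xstar = ∅)
    (hπpos : ∀ x, 0 < π x)
    {w : X × X → ℝ} {ω : X → ℝ} {r : ℝ}
    (hr0 : 0 < r) (hr1 : r < 1)
    (hω_pos : ∀ z, 0 < ω z) (hω_ge1 : ∀ z, 1 ≤ ω z)
    (hω_step : ∀ z u, u ∈ NS π N S z → ω u ≤ r * ω z)
    (hw : ∀ z u, u ∈ NS π N S z → w (z, u) = ω z)
    (hwnn : ∀ e, 0 ≤ w e)
    (hi : ∀ u, (∑ x, π x * qfun π N S P x u) ≤ r ^ 2 * π u)
    (hj : ∀ u, (∑ x, π x * ω x * qfun π N S P x u) ≤ r * (π u * ω u))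
    (hm : (∑ y, π y * ω y) ≤ 1 / (1 - r))
    {a b : X} (hb : b ∈ NS π N S a) :
    (∑ x, π x * Ge π N S xstar P w (a, b) x)
      + (∑ x, π x * Fe π N S xstar P (a, b) x) * (∑ y, π y * Lam π N S xstar P w y)
    ≤ (2 / (1 - r) ^ 3) * (π a * qfun π N S P a b * ω a) := by
  have h1mr : 0 < 1 - r := by linarith
  have h1mr2 : 0 < 1 - r ^ 2 := by nlinarith
  have hqab : 0 ≤ qfun π N S P a b := qfun_nonneg hPnn a b
  have hπa : 0 < π a := hπpos a
  have hωa : 0 < ω a := hω_pos a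
  have hFn : ∀ u, 0 ≤ Fe π N S xstar P (a, b) u := fun u => Fe_nonneg hPnn _ u
  have hGn : ∀ u, 0 ≤ Ge π N S xstar P w (a, b) u := fun u => Ge_nonneg hPnn hwnn _ u
  have hLn : ∀ u, 0 ≤ Lam π N S xstar P w u := fun u => Lam_nonneg hPnn hwnn u
  have hLam_le : ∀ u, Lam π N S xstar P w u ≤ ω u / (1 - r) :=
    Lam_le hup hNSne hPpos hPnn hω_pos hω_step hw (le_of_lt hr0) hr1 hwnn
  set X' := π a * ω a * qfun π N S P a b with hX'
  have hX0 : 0 ≤ X' := mul_nonneg (mul_nonneg (le_of_lt hπa) (le_of_lt hωa)) hqab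
  have hXq : π a * qfun π N S P a b ≤ X' := by
    rw [hX']
    nlinarith [hω_ge1 a, mul_nonneg (le_of_lt hπa) hqab]
  set FF := ∑ x, π x * Fe π N S xstar P (a, b) x with hFF
  set FW := ∑ x, π x * ω x * Fe π N S xstar P (a, b) x with hFW
  set GG := ∑ x, π x * Ge π N S xstar P w (a, b) x with hGG
  set LL := ∑ y, π y * Lam π N S xstar P w y with hLL
  have hFF0 : 0 ≤ FF :=
    Finset.sum_nonneg fun x _ => mul_nonneg (le_of_lt (hπpos x)) (hFn x)
  have hFW0 : 0 ≤ FW := Finset.sum_nonneg fun x _ =>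
    mul_nonneg (mul_nonneg (le_of_lt (hπpos x)) (le_of_lt (hω_pos x))) (hFn x)
  have hGG0 : 0 ≤ GG :=
    Finset.sum_nonneg fun x _ => mul_nonneg (le_of_lt (hπpos x)) (hGn x)
  have hLL0 : 0 ≤ LL :=
    Finset.sum_nonneg fun y _ => mul_nonneg (le_of_lt (hπpos y)) (hLn y)
  -- FF bound
  have hFFstep : FF ≤ π a * qfun π N S P a b + r ^ 2 * FF := by
    have h0 := step_bound hup hNSne hPpos hPnn hNSxstar π
      (fun x => le_of_lt (hπpos x)) (fun u => r ^ 2 * π u) hi hb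
    have h1 : (∑ u, r ^ 2 * π u * Fe π N S xstar P (a, b) u) = r ^ 2 * FF := by
      rw [hFF, Finset.mul_sum]
      exact Finset.sum_congr rfl fun u _ => by ring
    rw [h1] at h0
    exact h0
  have hFFkey : FF * (1 - r ^ 2) ≤ X' := by nlinarith
  -- FW bound
  have hFWstep : FW ≤ π a * ω a * qfun π N S P a b + r * FW := by
    have h0 := step_bound hup hNSne hPpos hPnn hNSxstar (fun x => π x * ω x)
      (fun x => mul_nonneg (le_of_lt (hπpos x)) (le_of_lt (hω_pos x)))
      (fun u => r * (π u * ω u)) hj hb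
    have h1 : (∑ u, r * (π u * ω u) * Fe π N S xstar P (a, b) u) = r * FW := by
      rw [hFW, Finset.mul_sum]
      exact Finset.sum_congr rfl fun u _ => by ring
    rw [h1] at h0
    exact h0
  have hFWkey : FW * (1 - r) ≤ X' := by nlinarith
  -- GG bound
  have hGGstep : GG ≤ π a * qfun π N S P a b * (ω a / (1 - r)) + r * FW + r ^ 2 * GG := by
    have h1 : GG = ∑ x, ∑ u ∈ NS π N S x,
        π x * (qfun π N S P x u *
          (if (x, u) = (a, b) then (w (x, u) + Lam π N S xstar P w u)
            else (w (x, u) * Fe π N S xstar P (a, b) u + Ge π N S xstar P w (a, b) u))) := by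
      rw [hGG]
      apply Finset.sum_congr rfl
      intro x _
      rw [Ge_rec hup hNSne hPpos hNSxstar w (a, b) x, Finset.mul_sum]
    have h2 : ∀ x : X, ∀ u ∈ NS π N S x,
        π x * (qfun π N S P x u *
          (if (x, u) = (a, b) then (w (x, u) + Lam π N S xstar P w u)
            else (w (x, u) * Fe π N S xstar P (a, b) u + Ge π N S xstar P w (a, b) u)))
          ≤ (if (x, u) = (a, b) then π x * qfun π N S P x u * (ω a / (1 - r)) else 0)
            + (π x * ω x * Fe π N S xstar P (a, b) u * qfun π N S P x u
              + π x * Ge π N S xstar P w (a, b) u * qfun π N S P x u) := by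
      intro x u hu
      have hq0 : 0 ≤ qfun π N S P x u := qfun_nonneg hPnn x u
      have hπx : 0 ≤ π x := le_of_lt (hπpos x)
      have hwxu : w (x, u) = ω x := hw x u hu
      have hB : 0 ≤ π x * ω x * Fe π N S xstar P (a, b) u * qfun π N S P x u
            + π x * Ge π N S xstar P w (a, b) u * qfun π N S P x u :=
        add_nonneg
          (mul_nonneg (mul_nonneg (mul_nonneg hπx (le_of_lt (hω_pos x))) (hFn u)) hq0)
          (mul_nonneg (mul_nonneg hπx (hGn u)) hq0)
      by_cases hc : (x, u) = (a, b)
      · rw [if_pos hc, if_pos hc]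
        have hxa : x = a := (Prod.mk.inj hc).1
        have hub : u = b := (Prod.mk.inj hc).2
        have hA : w (x, u) + Lam π N S xstar P w u ≤ ω a / (1 - r) := by
          have l1 : Lam π N S xstar P w u ≤ ω u / (1 - r) := hLam_le u
          have l2 : ω u ≤ r * ω a := by
            have l2a := hω_step x u hu
            rw [hxa] at l2a
            exact l2a
          have l3 : ω u / (1 - r) ≤ r * ω a / (1 - r) := (div_le_div_iff_of_pos_right h1mr).mpr l2
          have l4 : w (x, u) = ω a := by rw [hwxu, hxa]
          have l5id : ω a + r * ω a / (1 - r) = ω a / (1 - r) := by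
            field_simp
            ring
          rw [l4]
          linarith
        have l5 : π x * (qfun π N S P x u * (w (x, u) + Lam π N S xstar P w u))
            ≤ π x * qfun π N S P x u * (ω a / (1 - r)) := by
          have := mul_le_mul_of_nonneg_left hA (mul_nonneg hπx hq0)
          calc π x * (qfun π N S P x u * (w (x, u) + Lam π N S xstar P w u))
              = (π x * qfun π N S P x u) * (w (x, u) + Lam π N S xstar P w u) := by ring
            _ ≤ (π x * qfun π N S P x u) * (ω a / (1 - r)) := this
        linarith
      · rw [if_neg hc, if_neg hc]
        have l6 : π x * (qfun π N S P x u *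
            (w (x, u) * Fe π N S xstar P (a, b) u + Ge π N S xstar P w (a, b) u))
            = π x * ω x * Fe π N S xstar P (a, b) u * qfun π N S P x u
              + π x * Ge π N S xstar P w (a, b) u * qfun π N S P x u := by
          rw [hwxu]
          ring
        rw [l6]
        linarith
    calc GG ≤ ∑ x, ∑ u ∈ NS π N S x,
          ((if (x, u) = (a, b) then π x * qfun π N S P x u * (ω a / (1 - r)) else 0)
            + (π x * ω x * Fe π N S xstar P (a, b) u * qfun π N S P x u
              + π x * Ge π N S xstar P w (a, b) u * qfun π N S P x u)) := by
          rw [h1]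
          exact Finset.sum_le_sum fun x _ => Finset.sum_le_sum (h2 x)
      _ = (∑ x, ∑ u ∈ NS π N S x,
            if (x, u) = (a, b) then π x * qfun π N S P x u * (ω a / (1 - r)) else 0)
          + ((∑ x, ∑ u ∈ NS π N S x,
              π x * ω x * Fe π N S xstar P (a, b) u * qfun π N S P x u)
            + (∑ x, ∑ u ∈ NS π N S x,
              π x * Ge π N S xstar P w (a, b) u * qfun π N S P x u)) := by
          rw [← Finset.sum_add_distrib, ← Finset.sum_add_distrib]
          apply Finset.sum_congr rfl
          intro x _
          rw [← Finset.sum_add_distrib, ← Finset.sum_add_distrib]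
      _ ≤ π a * qfun π N S P a b * (ω a / (1 - r)) + r * FW + r ^ 2 * GG := by
          rw [sum_sum_ite_eq hb (fun x u => π x * qfun π N S P x u * (ω a / (1 - r)))]
          have hT1 : (∑ x, ∑ u ∈ NS π N S x,
              π x * ω x * Fe π N S xstar P (a, b) u * qfun π N S P x u) ≤ r * FW := by
            rw [sum_NS_extend (fun x u => π x * ω x * Fe π N S xstar P (a, b) u * qfun π N S P x u)
              (fun x u hu => by
                show π x * ω x * Fe π N S xstar P (a, b) u * qfun π N S P x u = 0
                rw [qfun_zero_of_not_mem hu, mul_zero])]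
            have h4 : ∀ u : X, (∑ x, π x * ω x * Fe π N S xstar P (a, b) u * qfun π N S P x u)
                = (∑ x, π x * ω x * qfun π N S P x u) * Fe π N S xstar P (a, b) u := by
              intro u
              rw [Finset.sum_mul]
              exact Finset.sum_congr rfl fun x _ => by ring
            calc (∑ u, ∑ x, π x * ω x * Fe π N S xstar P (a, b) u * qfun π N S P x u)
                = ∑ u, (∑ x, π x * ω x * qfun π N S P x u) * Fe π N S xstar P (a, b) u :=
                  Finset.sum_congr rfl fun u _ => h4 u
              _ ≤ ∑ u, r * (π u * ω u) * Fe π N S xstar P (a, b) u :=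
                  Finset.sum_le_sum fun u _ =>
                    mul_le_mul_of_nonneg_right (hj u) (hFn u)
              _ = r * FW := by
                  rw [hFW, Finset.mul_sum]
                  exact Finset.sum_congr rfl fun u _ => by ring
          have hT2 : (∑ x, ∑ u ∈ NS π N S x,
              π x * Ge π N S xstar P w (a, b) u * qfun π N S P x u) ≤ r ^ 2 * GG := by
            rw [sum_NS_extend (fun x u => π x * Ge π N S xstar P w (a, b) u * qfun π N S P x u)
              (fun x u hu => by
                show π x * Ge π N S xstar P w (a, b) u * qfun π N S P x u = 0
                rw [qfun_zero_of_not_mem hu, mul_zero])]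
            have h4 : ∀ u : X, (∑ x, π x * Ge π N S xstar P w (a, b) u * qfun π N S P x u)
                = (∑ x, π x * qfun π N S P x u) * Ge π N S xstar P w (a, b) u := by
              intro u
              rw [Finset.sum_mul]
              exact Finset.sum_congr rfl fun x _ => by ring
            calc (∑ u, ∑ x, π x * Ge π N S xstar P w (a, b) u * qfun π N S P x u)
                = ∑ u, (∑ x, π x * qfun π N S P x u) * Ge π N S xstar P w (a, b) u :=
                  Finset.sum_congr rfl fun u _ => h4 u
              _ ≤ ∑ u, r ^ 2 * π u * Ge π N S xstar P w (a, b) u :=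
                  Finset.sum_le_sum fun u _ =>
                    mul_le_mul_of_nonneg_right (hi u) (hGn u)
              _ = r ^ 2 * GG := by
                  rw [hGG, Finset.mul_sum]
                  exact Finset.sum_congr rfl fun u _ => by ring
          linarith
  -- key inequalities
  have hGGkey : GG * (1 - r) ^ 2 ≤ X' := by
    have hq1 : π a * qfun π N S P a b * (ω a / (1 - r)) = X' / (1 - r) := by
      rw [hX']
      field_simp
    rw [hq1] at hGGstep
    have h5 : GG * (1 - r ^ 2) ≤ X' / (1 - r) + r * FW := by linarith
    have h6 : FW ≤ X' / (1 - r) := by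
      rw [le_div_iff₀ h1mr]
      exact hFWkey
    have h7 : GG * (1 - r ^ 2) ≤ X' * (1 + r) / (1 - r) := by
      have : X' / (1 - r) + r * (X' / (1 - r)) = X' * (1 + r) / (1 - r) := by ring
      nlinarith [h6, hr0]
    have h8 : GG * (1 - r ^ 2) * (1 - r) ≤ X' * (1 + r) := by
      have h9 := mul_le_mul_of_nonneg_right h7 (le_of_lt h1mr)
      calc GG * (1 - r ^ 2) * (1 - r) ≤ X' * (1 + r) / (1 - r) * (1 - r) := h9
        _ = X' * (1 + r) := by field_simp
    have h1pr : 0 < 1 + r := by linarith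
    nlinarith [h8]
  have hLLkey : LL * (1 - r) ^ 2 ≤ 1 := by
    have h5 : LL ≤ (∑ y, π y * ω y) / (1 - r) := by
      rw [hLL, Finset.sum_div]
      apply Finset.sum_le_sum
      intro y _
      calc π y * Lam π N S xstar P w y ≤ π y * (ω y / (1 - r)) :=
          mul_le_mul_of_nonneg_left (hLam_le y) (le_of_lt (hπpos y))
        _ = π y * ω y / (1 - r) := by ring
    have h6 : (∑ y, π y * ω y) / (1 - r) ≤ (1 / (1 - r)) / (1 - r) :=
      (div_le_div_iff_of_pos_right h1mr).mpr hm
    have h7 : (1 / (1 - r)) / (1 - r) = 1 / (1 - r) ^ 2 := by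
      field_simp
    have h8 : LL ≤ 1 / (1 - r) ^ 2 := by linarith
    exact (le_div_iff₀ (pow_pos h1mr 2)).mp h8
  -- final assembly
  have hfinal : (GG + FF * LL) * (1 - r) ^ 3 ≤ 2 * X' := by
    have g1a := mul_le_mul_of_nonneg_right hGGkey (le_of_lt h1mr)
    have g1 : GG * (1 - r) ^ 3 ≤ X' := by
      nlinarith [g1a, mul_nonneg hX0 (le_of_lt hr0)]
    have e2 : FF * LL * (1 - r) ^ 3 = (FF * (1 - r)) * (LL * (1 - r) ^ 2) := by ring
    have e3 : (FF * (1 - r)) * (LL * (1 - r) ^ 2) ≤ (FF * (1 - r)) * 1 :=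
      mul_le_mul_of_nonneg_left hLLkey (mul_nonneg hFF0 (le_of_lt h1mr))
    have e4 : FF * (1 - r) ≤ FF * (1 - r ^ 2) := by nlinarith [mul_nonneg (mul_nonneg hFF0 (le_of_lt hr0)) (le_of_lt h1mr)]
    have e5 : FF * (1 - r ^ 2) ≤ X' := by
      calc FF * (1 - r ^ 2) ≤ π a * qfun π N S P a b := by nlinarith [hFFstep]
        _ ≤ X' := hXq
    have g2 : FF * LL * (1 - r) ^ 3 ≤ X' := by
      rw [e2]
      calc (FF * (1 - r)) * (LL * (1 - r) ^ 2) ≤ (FF * (1 - r)) * 1 := e3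
        _ = FF * (1 - r) := mul_one _
        _ ≤ FF * (1 - r ^ 2) := e4
        _ ≤ X' := e5
    calc (GG + FF * LL) * (1 - r) ^ 3 = GG * (1 - r) ^ 3 + FF * LL * (1 - r) ^ 3 := by ring
      _ ≤ 2 * X' := by linarith
  have hpow : 0 < (1 - r) ^ 3 := pow_pos h1mr 3
  have hgoal : (2 / (1 - r) ^ 3) * (π a * qfun π N S P a b * ω a) = 2 * X' / (1 - r) ^ 3 := by
    rw [hX']
    ring
  rw [hgoal, le_div_iff₀ hpow]
  exact hfinal

end StmtAux8

namespace StmtAux9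
open Finset List StmtAux StmtAux2 StmtAux3 StmtAux4 StmtAux5 StmtAux6 StmtAux7 StmtAux8

set_option linter.unusedSectionVars false
set_option linter.unusedVariables false
set_option maxHeartbeats 2000000

variable {X : Type*} [Fintype X] [DecidableEq X]
variable {π : X → ℝ} {N : X → Finset X} {S : ℝ} {xstar : X} {P : Matrix X X ℝ}

lemma pairs_sum_up (hπpos : ∀ x, 0 < π x) (hπsum : ∑ x, π x = 1)
    (hPnn : ∀ x y, 0 ≤ P x y) {w : X × X → ℝ} (hwnn : ∀ e, 0 ≤ w e) (e : X × X) :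
    (∑ p ∈ Pairs X, π p.1 * π p.2 *
        (Ge π N S xstar P w e p.1 + Fe π N S xstar P e p.1 * Lam π N S xstar P w p.2))
      ≤ (∑ x, π x * Ge π N S xstar P w e x)
        + (∑ x, π x * Fe π N S xstar P e x) * (∑ y, π y * Lam π N S xstar P w y) := by
  have hnn : ∀ p : X × X, 0 ≤ π p.1 * π p.2 *
      (Ge π N S xstar P w e p.1 + Fe π N S xstar P e p.1 * Lam π N S xstar P w p.2) := by
    intro p
    apply mul_nonneg (mul_nonneg (le_of_lt (hπpos _)) (le_of_lt (hπpos _)))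
    exact add_nonneg (Ge_nonneg hPnn hwnn e p.1)
      (mul_nonneg (Fe_nonneg hPnn e p.1) (Lam_nonneg hPnn hwnn p.2))
  calc (∑ p ∈ Pairs X, π p.1 * π p.2 *
        (Ge π N S xstar P w e p.1 + Fe π N S xstar P e p.1 * Lam π N S xstar P w p.2))
      ≤ ∑ p ∈ (Finset.univ : Finset (X × X)), π p.1 * π p.2 *
        (Ge π N S xstar P w e p.1 + Fe π N S xstar P e p.1 * Lam π N S xstar P w p.2) := by
        apply Finset.sum_le_sum_of_subset_of_nonneg (Finset.filter_subset _ _)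
        intro p _ _
        exact hnn p
    _ = ∑ p ∈ Finset.univ ×ˢ Finset.univ, π p.1 * π p.2 *
        (Ge π N S xstar P w e p.1 + Fe π N S xstar P e p.1 * Lam π N S xstar P w p.2) := by
        rw [Finset.univ_product_univ]
    _ = ∑ x, ∑ y, π x * π y *
        (Ge π N S xstar P w e x + Fe π N S xstar P e x * Lam π N S xstar P w y) :=
        Finset.sum_product _ _ _
    _ = (∑ x, π x * Ge π N S xstar P w e x)
        + (∑ x, π x * Fe π N S xstar P e x) * (∑ y, π y * Lam π N S xstar P w y) := by
        have hx : ∀ x ∈ Finset.univ, (∑ y, π x * π y *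
            (Ge π N S xstar P w e x + Fe π N S xstar P e x * Lam π N S xstar P w y))
            = π x * Ge π N S xstar P w e x
              + π x * Fe π N S xstar P e x * (∑ y, π y * Lam π N S xstar P w y) := by
          intro x _
          have h1 : ∀ y ∈ Finset.univ, π x * π y *
              (Ge π N S xstar P w e x + Fe π N S xstar P e x * Lam π N S xstar P w y)
              = (π x * Ge π N S xstar P w e x) * π y
                + (π x * Fe π N S xstar P e x) * (π y * Lam π N S xstar P w y) :=
            fun y _ => by ring
          rw [Finset.sum_congr rfl h1, Finset.sum_add_distrib, ← Finset.mul_sum,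
            ← Finset.mul_sum, hπsum, mul_one]
        rw [Finset.sum_congr rfl hx, Finset.sum_add_distrib, ← Finset.sum_mul]

lemma pairs_sum_down (hπpos : ∀ x, 0 < π x) (hπsum : ∑ x, π x = 1)
    (hPnn : ∀ x y, 0 ≤ P x y) {w : X × X → ℝ} (hwnn : ∀ e, 0 ≤ w e) (e : X × X) :
    (∑ p ∈ Pairs X, π p.1 * π p.2 *
        (Lam π N S xstar P w p.1 * Fe π N S xstar P e p.2 + Ge π N S xstar P w e p.2))
      ≤ (∑ x, π x * Ge π N S xstar P w e x)
        + (∑ x, π x * Fe π N S xstar P e x) * (∑ y, π y * Lam π N S xstar P w y) := by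
  have hnn : ∀ p : X × X, 0 ≤ π p.1 * π p.2 *
      (Lam π N S xstar P w p.1 * Fe π N S xstar P e p.2 + Ge π N S xstar P w e p.2) := by
    intro p
    apply mul_nonneg (mul_nonneg (le_of_lt (hπpos _)) (le_of_lt (hπpos _)))
    exact add_nonneg
      (mul_nonneg (Lam_nonneg hPnn hwnn p.1) (Fe_nonneg hPnn e p.2))
      (Ge_nonneg hPnn hwnn e p.2)
  calc (∑ p ∈ Pairs X, π p.1 * π p.2 *
        (Lam π N S xstar P w p.1 * Fe π N S xstar P e p.2 + Ge π N S xstar P w e p.2))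
      ≤ ∑ p ∈ (Finset.univ : Finset (X × X)), π p.1 * π p.2 *
        (Lam π N S xstar P w p.1 * Fe π N S xstar P e p.2 + Ge π N S xstar P w e p.2) := by
        apply Finset.sum_le_sum_of_subset_of_nonneg (Finset.filter_subset _ _)
        intro p _ _
        exact hnn p
    _ = ∑ p ∈ Finset.univ ×ˢ Finset.univ, π p.1 * π p.2 *
        (Lam π N S xstar P w p.1 * Fe π N S xstar P e p.2 + Ge π N S xstar P w e p.2) := by
        rw [Finset.univ_product_univ]
    _ = ∑ x, ∑ y, π x * π y *
        (Lam π N S xstar P w x * Fe π N S xstar P e y + Ge π N S xstar P w e y) :=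
        Finset.sum_product _ _ _
    _ = (∑ x, π x * Lam π N S xstar P w x) * (∑ y, π y * Fe π N S xstar P e y)
        + (∑ y, π y * Ge π N S xstar P w e y) := by
        have hx : ∀ x ∈ Finset.univ, (∑ y, π x * π y *
            (Lam π N S xstar P w x * Fe π N S xstar P e y + Ge π N S xstar P w e y))
            = (π x * Lam π N S xstar P w x) * (∑ y, π y * Fe π N S xstar P e y)
              + π x * (∑ y, π y * Ge π N S xstar P w e y) := by
          intro x _
          have h1 : ∀ y ∈ Finset.univ, π x * π y *
              (Lam π N S xstar P w x * Fe π N S xstar P e y + Ge π N S xstar P w e y)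
              = (π x * Lam π N S xstar P w x) * (π y * Fe π N S xstar P e y)
                + π x * (π y * Ge π N S xstar P w e y) :=
            fun y _ => by ring
          rw [Finset.sum_congr rfl h1, Finset.sum_add_distrib, ← Finset.mul_sum,
            ← Finset.mul_sum]
        rw [Finset.sum_congr rfl hx, Finset.sum_add_distrib, ← Finset.sum_mul, ← Finset.sum_mul,
          hπsum, one_mul]
    _ = (∑ x, π x * Ge π N S xstar P w e x)
        + (∑ x, π x * Fe π N S xstar P e x) * (∑ y, π y * Lam π N S xstar P w y) := by
        ring
end StmtAux9

set_option maxHeartbeats 2000000 in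
theorem stmt11 {X : Type*} [Fintype X] [DecidableEq X]
    (π : X → ℝ) (hπpos : ∀ x, 0 < π x) (hπsum : ∑ x, π x = 1)
    (N : X → Finset X)
    (hNirr : ∀ x, x ∉ N x)
    (hNsym : ∀ x y, y ∈ N x → x ∈ N y)
    (hNconn : ∀ x y : X, Relation.ReflTransGen (fun a b => b ∈ N a) x y)
    (xstar : X) (hxstar : ∀ x, π x ≤ π xstar)
    (P : Matrix X X ℝ) (hProw : ∀ x, ∑ y, P x y = 1) (hPnn : ∀ x y, 0 ≤ P x y)
    (hrev : ∀ x y, π x * P x y = π y * P y x)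
    (hsupp : ∀ x y : X, (y ≠ x ∧ 0 < P x y) ↔ y ∈ N x)
    (hRM : (Mmax N : ℝ) < Rval π N xstar)
    (S : ℝ) (hS1 : (Mmax N : ℝ) < S) (hSR : S ≤ Rval π N xstar) :
    ∃ (w : X × X → ℝ) (φ : List X → ℝ),
      (∀ e ∈ ES π N S, 0 < w e) ∧ (∀ γ, 0 ≤ φ γ) ∧
      (∀ x y : X, x ≠ y → flowBetween (ES π N S) φ x y = π x * π y) ∧
      congestion π P (ES π N S) w φ ≤
        cFun (S / (Mmax N : ℝ)) / 2 *
          ⨆ z : {z : X // z ≠ xstar}, (∑ u ∈ NS π N S z.1, P z.1 u)⁻¹ := by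
  classical
  by_cases hsing : ∀ z : X, z = xstar
  · refine ⟨fun _ => 1, fun _ => 0, fun e _ => one_pos, fun γ => le_refl 0, ?_, ?_⟩
    · intro x y hxy
      exact absurd ((hsing x).trans (hsing y).symm) hxy
    · haveI hempty : IsEmpty {z : X // z ≠ xstar} := ⟨fun z => z.2 (hsing z.1)⟩
      rw [Real.iSup_of_isEmpty, mul_zero, congestion]
      apply Real.iSup_le _ le_rfl
      intro e
      apply Real.iSup_le _ le_rfl
      intro _
      simp only [mul_zero, tsum_zero, zero_div, le_refl]
  · push_neg at hsing
    obtain ⟨z0, hz0⟩ := hsing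
    set M' : ℝ := (Mmax N : ℝ) with hM'
    have hM0 : (0:ℝ) ≤ M' := Nat.cast_nonneg _
    have hS0 : 0 < S := lt_of_le_of_lt hM0 hS1
    have hNSne : ∀ z, z ≠ xstar → (NS π N S z).Nonempty := by
      intro z hz
      have hfin : ((fun x => sSup ((fun y => π y / π x) '' (N x : Set X)))
          '' {x | x ≠ xstar}).Finite := (Set.toFinite _).image _
      have hmem : sSup ((fun y => π y / π z) '' (N z : Set X)) ∈
          ((fun x => sSup ((fun y => π y / π x) '' (N x : Set X))) '' {x | x ≠ xstar}) :=
        ⟨z, hz, rfl⟩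
      have hle : Rval π N xstar ≤ sSup ((fun y => π y / π z) '' (N z : Set X)) :=
        csInf_le hfin.bddBelow hmem
      have hSle : S ≤ sSup ((fun y => π y / π z) '' (N z : Set X)) := le_trans hSR hle
      have hNz : (N z : Set X).Nonempty := by
        by_contra hN
        rw [Set.not_nonempty_iff_eq_empty] at hN
        rw [hN, Set.image_empty, Real.sSup_empty] at hSle
        linarith
      have himg : ((fun y => π y / π z) '' (N z : Set X)).Nonempty := hNz.image _
      obtain ⟨y, hy, hyv⟩ := himg.csSup_mem (((N z : Set X).toFinite).image _)
      refine ⟨y, Finset.mem_filter.mpr ⟨hy, ?_⟩⟩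
      have hyv2 : π y / π z = sSup ((fun y => π y / π z) '' (N z : Set X)) := hyv
      rw [hyv2]
      exact hSle
    have hM1 : (1:ℝ) ≤ M' := by
      obtain ⟨y0, hy0⟩ := hNSne z0 hz0
      have h1 : 1 ≤ (N z0).card := Finset.card_pos.mpr ⟨y0, StmtAux7.NS_mem_N hy0⟩
      have h2 : (1:ℝ) ≤ ((N z0).card : ℝ) := by exact_mod_cast h1
      linarith [StmtAux7.Mcard N z0]
    have hS1' : (1:ℝ) < S := lt_of_le_of_lt hM1 hS1
    have hM0' : (0:ℝ) < M' := by linarith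
    have hup : ∀ z u, u ∈ NS π N S z → π z < π u := by
      intro z u hu
      have h1 := StmtAux7.NS_le_div hu
      rw [le_div_iff₀ (hπpos z)] at h1
      nlinarith [hπpos z]
    have hπle1 : ∀ z, π z ≤ 1 := by
      intro z
      rw [← hπsum]
      exact Finset.single_le_sum (fun i _ => le_of_lt (hπpos i)) (Finset.mem_univ z)
    have hNSxstar : NS π N S xstar = ∅ := by
      rw [Finset.eq_empty_iff_forall_notMem]
      intro u hu
      exact absurd (hxstar u) (not_le.mpr (hup xstar u hu))
    have hPposNS : ∀ z, ∀ u ∈ NS π N S z, 0 < P z u := fun z u hu =>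
      ((hsupp z u).mpr (StmtAux7.NS_mem_N hu)).2
    -- the decay rate r and exponent β
    set ρ : ℝ := S / M' with hρ
    have hρ1 : 1 < ρ := (one_lt_div hM0').mpr hS1
    have hρ0 : 0 < ρ := lt_trans one_pos hρ1
    set r : ℝ := ρ ^ (-(2:ℝ)⁻¹) with hrdef
    have hr0 : 0 < r := Real.rpow_pos_of_pos hρ0 _
    have hr1 : r < 1 := Real.rpow_lt_one_of_one_lt_of_neg hρ1 (by norm_num)
    have h1mr : 0 < 1 - r := by linarith
    have hr2 : r ^ 2 = M' / S := by
      rw [hrdef, ← Real.rpow_natCast (ρ ^ (-(2:ℝ)⁻¹)) 2, ← Real.rpow_mul (le_of_lt hρ0)]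
      have hexp : (-(2:ℝ)⁻¹) * ((2:ℕ):ℝ) = -1 := by norm_num
      rw [hexp, Real.rpow_neg_one, hρ, inv_div]
    have hrS : 1 < r * S := by
      have h3 : (r * S) ^ 2 = M' * S := by
        rw [mul_pow, hr2]
        field_simp
      nlinarith [mul_pos hr0 hS0]
    set β : ℝ := Real.logb S r⁻¹ with hβdef
    have hSβ : S ^ β = r⁻¹ := Real.rpow_logb hS0 (ne_of_gt hS1') (inv_pos.mpr hr0)
    have hβ0 : 0 ≤ β := Real.logb_nonneg hS1' (one_le_inv_iff₀.mpr ⟨hr0, le_of_lt hr1⟩)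
    have hrinvS : r⁻¹ < S := by
      rw [inv_eq_one_div, div_lt_iff₀ hr0]
      nlinarith
    have hβ1 : β < 1 := by
      have h2 : S ^ β < S ^ (1:ℝ) := by
        rw [hSβ, Real.rpow_one]
        exact hrinvS
      exact (Real.rpow_lt_rpow_left_iff hS1').mp h2
    have h1mβ : (0:ℝ) ≤ 1 - β := by linarith
    have hSmb : S ^ (-β) = r := by rw [Real.rpow_neg (le_of_lt hS0), hSβ, inv_inv]
    have hS1mβ : S ^ ((1:ℝ) - β) = S * r := by
      rw [sub_eq_add_neg, Real.rpow_add hS0, Real.rpow_one, hSmb]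
    -- the vertex weight ω and edge weight w
    set ω : X → ℝ := fun z => π z ^ (-β) with hωdef
    have hω_pos : ∀ z, 0 < ω z := fun z => Real.rpow_pos_of_pos (hπpos z) _
    have hω_ge1 : ∀ z, 1 ≤ ω z := fun z =>
      Real.one_le_rpow_of_pos_of_le_one_of_nonpos (hπpos z) (hπle1 z) (neg_nonpos.mpr hβ0)
    have hpirpow : ∀ z, π z ^ ((1:ℝ) - β) = π z * ω z := by
      intro z
      rw [sub_eq_add_neg, Real.rpow_add (hπpos z), Real.rpow_one]
    have hω_step : ∀ z u, u ∈ NS π N S z → ω u ≤ r * ω z := by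
      intro z u hu
      have h1 : S * π z ≤ π u := by
        have h2 := StmtAux7.NS_le_div hu
        rw [le_div_iff₀ (hπpos z)] at h2
        linarith
      have h2 : π u ^ (-β) ≤ (S * π z) ^ (-β) :=
        Real.rpow_le_rpow_of_nonpos (mul_pos hS0 (hπpos z)) h1 (neg_nonpos.mpr hβ0)
      have h3 : (S * π z) ^ (-β) = S ^ (-β) * π z ^ (-β) :=
        Real.mul_rpow (le_of_lt hS0) (le_of_lt (hπpos z))
      show π u ^ (-β) ≤ r * π z ^ (-β)
      calc π u ^ (-β) ≤ (S * π z) ^ (-β) := h2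
        _ = r * π z ^ (-β) := by rw [h3, hSmb]
    set w : X × X → ℝ := fun e => (min (π e.1) (π e.2)) ^ (-β) with hwdef
    have hwpos : ∀ e, 0 < w e := fun e =>
      Real.rpow_pos_of_pos (lt_min (hπpos _) (hπpos _)) _
    have hwnn : ∀ e, 0 ≤ w e := fun e => le_of_lt (hwpos e)
    have hsym : ∀ e : X × X, w (Prod.swap e) = w e := by
      intro e
      show (min (π e.swap.1) (π e.swap.2)) ^ (-β) = (min (π e.1) (π e.2)) ^ (-β)
      rw [Prod.fst_swap, Prod.snd_swap, min_comm]
    have hw : ∀ z u, u ∈ NS π N S z → w (z, u) = ω z := by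
      intro z u hu
      show (min (π (z, u).1) (π (z, u).2)) ^ (-β) = π z ^ (-β)
      rw [min_eq_left (le_of_lt (hup z u hu))]
    -- the weighted in-flow bounds
    have hi : ∀ u, (∑ x, π x * StmtAux3.qfun π N S P x u) ≤ r ^ 2 * π u := by
      intro u
      have h0 := StmtAux7.qsum_bound hNsym hPnn u π (fun x => le_of_lt (hπpos x)) (π u / S)
        (div_nonneg (le_of_lt (hπpos u)) (le_of_lt hS0)) (fun x hx => StmtAux7.NS_pi_le hπpos hS0 hx)
      calc (∑ x, π x * StmtAux3.qfun π N S P x u) ≤ M' * (π u / S) := h0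
        _ = r ^ 2 * π u := by rw [hr2]; ring
    have hj : ∀ u, (∑ x, π x * ω x * StmtAux3.qfun π N S P x u) ≤ r * (π u * ω u) := by
      intro u
      have hbnd : ∀ x, u ∈ NS π N S x → π x * ω x ≤ (π u / S) ^ ((1:ℝ) - β) := by
        intro x hx
        rw [← hpirpow x]
        exact Real.rpow_le_rpow (le_of_lt (hπpos x))
          (StmtAux7.NS_pi_le hπpos hS0 hx) h1mβ
      have h0 := StmtAux7.qsum_bound hNsym hPnn u (fun x => π x * ω x)
        (fun x => mul_nonneg (le_of_lt (hπpos x)) (le_of_lt (hω_pos x)))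
        ((π u / S) ^ ((1:ℝ) - β)) (Real.rpow_nonneg (div_nonneg (le_of_lt (hπpos u)) (le_of_lt hS0)) _) hbnd
      have hEq : M' * (π u / S) ^ ((1:ℝ) - β) = r * (π u * ω u) := by
        rw [Real.div_rpow (le_of_lt (hπpos u)) (le_of_lt hS0), hpirpow u, hS1mβ]
        have hMeq : M' = r ^ 2 * S := by
          rw [hr2]
          field_simp
        rw [hMeq]
        have hSne : S ≠ 0 := ne_of_gt hS0
        have hrne : r ≠ 0 := ne_of_gt hr0
        field_simp
      calc (∑ x, π x * ω x * StmtAux3.qfun π N S P x u) ≤ M' * (π u / S) ^ ((1:ℝ) - β) := h0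
        _ = r * (π u * ω u) := hEq
    -- the mass bound
    have hm : (∑ y, π y * ω y) ≤ 1 / (1 - r) := by
      set up : X → X := fun y => if h : y ≠ xstar then (hNSne y h).choose else xstar with hupdef
      have hupmem : ∀ y, y ≠ xstar → up y ∈ NS π N S y := by
        intro y hy
        show (if h : y ≠ xstar then (hNSne y h).choose else xstar) ∈ NS π N S y
        rw [dif_pos hy]
        exact (hNSne y hy).choose_spec
      have hc0 : (0:ℝ) ≤ S ^ (β - 1) := Real.rpow_nonneg (le_of_lt hS0) _
      have hq : S ^ (β - 1) = (S * r)⁻¹ := by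
        rw [show β - 1 = -((1:ℝ) - β) by ring, Real.rpow_neg (le_of_lt hS0), hS1mβ]
      apply StmtAux7.msum_bound hNsym hr1 hc0 up hupmem _
        (fun y => mul_nonneg (le_of_lt (hπpos y)) (le_of_lt (hω_pos y)))
      · intro y hy
        have h1 : π y ≤ π (up y) / S := StmtAux7.NS_pi_le hπpos hS0 (hupmem y hy)
        rw [← hpirpow y, ← hpirpow (up y)]
        calc π y ^ ((1:ℝ) - β) ≤ (π (up y) / S) ^ ((1:ℝ) - β) :=
            Real.rpow_le_rpow (le_of_lt (hπpos y)) h1 h1mβ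
          _ = π (up y) ^ ((1:ℝ) - β) / S ^ ((1:ℝ) - β) :=
            Real.div_rpow (le_of_lt (hπpos (up y))) (le_of_lt hS0) _
          _ = S ^ (β - 1) * π (up y) ^ ((1:ℝ) - β) := by
            rw [hq, hS1mβ, div_eq_mul_inv, mul_comm]
      · have hMeq : M' = r ^ 2 * S := by
          rw [hr2]
          field_simp
        rw [hq, ← hM', hMeq]
        have hSne : S ≠ 0 := ne_of_gt hS0
        have hrne : r ≠ 0 := ne_of_gt hr0
        have heq2 : (S * r)⁻¹ * (r ^ 2 * S) = r := by
          field_simp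
        rw [heq2]
      · rw [← hpirpow xstar]
        exact Real.rpow_le_one (le_of_lt (hπpos xstar)) (hπle1 xstar) h1mβ
    -- the sup of inverse escape probabilities
    haveI hne' : Nonempty {z : X // z ≠ xstar} := ⟨⟨z0, hz0⟩⟩
    set DD : ℝ := ⨆ z : {z : X // z ≠ xstar}, (∑ u ∈ NS π N S z.1, P z.1 u)⁻¹ with hDD
    have hDDb : ∀ a : X, a ≠ xstar → (∑ u ∈ NS π N S a, P a u)⁻¹ ≤ DD := by
      intro a ha
      exact le_ciSup (f := fun z : {z : X // z ≠ xstar} => (∑ u ∈ NS π N S z.1, P z.1 u)⁻¹)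
        (Set.Finite.bddAbove (Set.finite_range _)) (⟨a, ha⟩ : {z : X // z ≠ xstar})
    have hDD0 : 0 ≤ DD :=
      Real.iSup_nonneg fun z => inv_nonneg.mpr (Finset.sum_nonneg fun u _ => hPnn _ u)
    have hqD : ∀ a b, b ∈ NS π N S a → StmtAux3.qfun π N S P a b ≤ DD * P a b := by
      intro a b hb
      have ha : a ≠ xstar := by
        rintro rfl
        rw [hNSxstar] at hb
        exact absurd hb (Finset.notMem_empty b)
      rw [show StmtAux3.qfun π N S P a b = P a b / ∑ v ∈ NS π N S a, P a v from if_pos hb,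
        div_eq_mul_inv]
      calc P a b * (∑ v ∈ NS π N S a, P a v)⁻¹ ≤ P a b * DD :=
          mul_le_mul_of_nonneg_left (hDDb a ha) (hPnn a b)
        _ = DD * P a b := mul_comm _ _
    have hcFun : cFun (S / M') / 2 = 2 / (1 - r) ^ 3 := by
      rw [cFun, ← hρ, ← hrdef]
      have h3 : (1 - r) ^ 3 ≠ 0 := ne_of_gt (pow_pos h1mr 3)
      field_simp
      ring
    refine ⟨w, StmtAux5.phi π N S xstar P, fun e _ => hwpos e,
      StmtAux5.phi_nonneg hπpos hPnn,
      fun x y hxy => StmtAux5.flow_eq hup hNSne hPposNS hxy, ?_⟩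
    rw [congestion]
    set B : ℝ := cFun (S / M') / 2 * DD with hB
    have hB0 : 0 ≤ B := by
      rw [hB, hcFun]
      exact mul_nonneg (div_nonneg (by norm_num) (le_of_lt (pow_pos h1mr 3))) hDD0
    apply Real.iSup_le _ hB0
    intro e
    by_cases he : e ∈ ES π N S
    · haveI : Nonempty (e ∈ ES π N S) := ⟨he⟩
      rw [ciSup_const, StmtAux6.num_eq hup w e]
      rcases (Finset.mem_filter.mp he).2 with hcd | hdc
      · -- e.1 ∈ NS e.2 : down edge
        obtain ⟨c, d⟩ := e
        have hcd' : c ∈ NS π N S d := hcd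
        have hlt : π (c, d).2 < π (c, d).1 := hup d c hcd'
        rw [StmtAux6.NumSum_down_eq hup hNSne hPposNS hsym hlt]
        have hswap : Prod.swap (c, d) = (d, c) := rfl
        rw [hswap]
        have hPdc : 0 < P d c := hPposNS d c hcd'
        have hrev' : π (c, d).1 * P (c, d).1 (c, d).2 = π d * P d c := hrev c d
        have hwcd : w (c, d) = ω d := by
          show (min (π (c, d).1) (π (c, d).2)) ^ (-β) = π d ^ (-β)
          rw [min_eq_right (le_of_lt hlt)]
        have hden : 0 < π (c, d).1 * P (c, d).1 (c, d).2 * w (c, d) := by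
          rw [hrev']
          exact mul_pos (mul_pos (hπpos d) hPdc) (hwpos _)
        rw [div_le_iff₀ hden]
        have hstep1 := StmtAux9.pairs_sum_down (π := π) (N := N) (S := S) (xstar := xstar)
          (P := P) hπpos hπsum hPnn hwnn (d, c)
        have hmb := StmtAux8.master_bound hup hNSne hPposNS hPnn hNSxstar hπpos hr0 hr1
          hω_pos hω_ge1 hω_step hw hwnn hi hj hm hcd'
        have hfin : (2 / (1 - r) ^ 3) * (π d * StmtAux3.qfun π N S P d c * ω d)
            ≤ B * (π (c, d).1 * P (c, d).1 (c, d).2 * w (c, d)) := by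
          rw [hB, hcFun, hwcd, hrev']
          have h4 : StmtAux3.qfun π N S P d c ≤ DD * P d c := hqD d c hcd'
          have h5 : 0 ≤ 2 / (1 - r) ^ 3 * (π d * ω d) :=
            mul_nonneg (div_nonneg (by norm_num) (le_of_lt (pow_pos h1mr 3)))
              (mul_nonneg (le_of_lt (hπpos d)) (le_of_lt (hω_pos d)))
          calc 2 / (1 - r) ^ 3 * (π d * StmtAux3.qfun π N S P d c * ω d)
              = (2 / (1 - r) ^ 3 * (π d * ω d)) * StmtAux3.qfun π N S P d c := by ring
            _ ≤ (2 / (1 - r) ^ 3 * (π d * ω d)) * (DD * P d c) :=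
                mul_le_mul_of_nonneg_left h4 h5
            _ = 2 / (1 - r) ^ 3 * DD * (π d * P d c * ω d) := by ring
        linarith
      · -- e.2 ∈ NS e.1 : up edge
        obtain ⟨c, d⟩ := e
        have hdc' : d ∈ NS π N S c := hdc
        have hlt : π (c, d).1 < π (c, d).2 := hup c d hdc'
        rw [StmtAux6.NumSum_up_eq hup hNSne hPposNS hsym hlt]
        have hPcd : 0 < P c d := hPposNS c d hdc'
        have hwcd : w (c, d) = ω c := hw c d hdc'
        have hden : 0 < π (c, d).1 * P (c, d).1 (c, d).2 * w (c, d) :=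
          mul_pos (mul_pos (hπpos c) hPcd) (hwpos _)
        rw [div_le_iff₀ hden]
        have hstep1 := StmtAux9.pairs_sum_up (π := π) (N := N) (S := S) (xstar := xstar)
          (P := P) hπpos hπsum hPnn hwnn (c, d)
        have hmb := StmtAux8.master_bound hup hNSne hPposNS hPnn hNSxstar hπpos hr0 hr1
          hω_pos hω_ge1 hω_step hw hwnn hi hj hm hdc'
        have hfin : (2 / (1 - r) ^ 3) * (π c * StmtAux3.qfun π N S P c d * ω c)
            ≤ B * (π (c, d).1 * P (c, d).1 (c, d).2 * w (c, d)) := by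
          rw [hB, hcFun, hwcd]
          have h4 : StmtAux3.qfun π N S P c d ≤ DD * P c d := hqD c d hdc'
          have h5 : 0 ≤ 2 / (1 - r) ^ 3 * (π c * ω c) :=
            mul_nonneg (div_nonneg (by norm_num) (le_of_lt (pow_pos h1mr 3)))
              (mul_nonneg (le_of_lt (hπpos c)) (le_of_lt (hω_pos c)))
          calc 2 / (1 - r) ^ 3 * (π c * StmtAux3.qfun π N S P c d * ω c)
              = (2 / (1 - r) ^ 3 * (π c * ω c)) * StmtAux3.qfun π N S P c d := by ring
            _ ≤ (2 / (1 - r) ^ 3 * (π c * ω c)) * (DD * P c d) :=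
                mul_le_mul_of_nonneg_left h4 h5
            _ = 2 / (1 - r) ^ 3 * DD * (π c * P c d * ω c) := by ring
        linarith
    · haveI : IsEmpty (e ∈ ES π N S) := ⟨he⟩
      rw [Real.iSup_of_isEmpty]
      exact hB0
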